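/- arXiv:0905.2123 — 4 statements merged into one kernel-verified Lean document; each statement's English description precedes it below -/
import Mathlib

section
/- For the two-qubit state σ_AB = (1/4)(I⊗I + Σ_j r_j σ_j⊗σ_j) and local projective measurements along unit vectors n_A, n_B (POVMs (I ± n·σ)/2), the joint outcome distribution is (1+δ)/4, (1−δ)/4, (1−δ)/4, (1+δ)/4 with δ = Σ_j r_j n_{Aj} n_{Bj}, the resulting classical mutual information is 1 − H{(1+δ)/2, (1−δ)/2}, and |δ| ≤ max{|r₁|,|r₂|,|r₃|}; hence the maximum over local projective measurements is I^p_max = 1 − H{(1+r_m)/2, (1−r_m)/2} with r_m = max_j |r_j|. -/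
open Matrix BigOperators
open scoped Kronecker Classical ComplexOrder

noncomputable section

/-- Shannon entropy (base 2, with 0 log 0 = 0). -/
def shannon {ι : Type*} [Fintype ι] (p : ι → ℝ) : ℝ :=
  -∑ i, p i * Real.logb 2 (p i)

/-- Classical mutual information of a joint distribution. -/
def cMutualInfo {ι κ : Type*} [Fintype ι] [Fintype κ] (p : ι → κ → ℝ) : ℝ :=
  shannon (fun i => ∑ s, p i s) + shannon (fun s => ∑ i, p i s)
    - shannon (fun x : ι × κ => p x.1 x.2)

/-- Von Neumann entropy (base 2) via eigenvalues of a Hermitian matrix. -/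
def vnEntropy {n : Type*} [Fintype n] [DecidableEq n] (ρ : Matrix n n ℂ) : ℝ :=
  if h : ρ.IsHermitian then shannon h.eigenvalues else 0

/-- Partial trace over the second (right) factor. -/
def ptraceR {a b : Type*} [Fintype a] [Fintype b] (ρ : Matrix (a × b) (a × b) ℂ) :
    Matrix a a ℂ := fun i j => ∑ k, ρ (i, k) (j, k)

/-- Partial trace over the first (left) factor. -/
def ptraceL {a b : Type*} [Fintype a] [Fintype b] (ρ : Matrix (a × b) (a × b) ℂ) :
    Matrix b b ℂ := fun i j => ∑ k, ρ (k, i) (k, j)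

def IsDensityMatrix {n : Type*} [Fintype n] (ρ : Matrix n n ℂ) : Prop :=
  ρ.PosSemidef ∧ ρ.trace = 1

def IsPOVM {n ι : Type*} [Fintype n] [Fintype ι] [DecidableEq n]
    (M : ι → Matrix n n ℂ) : Prop :=
  (∀ i, (M i).PosSemidef) ∧ ∑ i, M i = 1

/-- Quantum mutual information S(A:B). -/
def qMutualInfo {a b : Type*} [Fintype a] [Fintype b] [DecidableEq a] [DecidableEq b]
    (ρ : Matrix (a × b) (a × b) ℂ) : ℝ :=
  vnEntropy (ptraceR ρ) + vnEntropy (ptraceL ρ) - vnEntropy ρ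

/-- Joint outcome probability of local measurements. -/
def measProb {a b ι κ : Type*} [Fintype a] [Fintype b] [Fintype ι] [Fintype κ]
    (ρ : Matrix (a × b) (a × b) ℂ) (M : ι → Matrix a a ℂ) (N : κ → Matrix b b ℂ)
    (i : ι) (s : κ) : ℝ := ((M i ⊗ₖ N s) * ρ).trace.re
/-- The three Pauli matrices. -/
def pauli : Fin 3 → Matrix (Fin 2) (Fin 2) ℂ :=
  ![!![0, 1; 1, 0], !![0, -Complex.I; Complex.I, 0], !![1, 0; 0, -1]]

/-- Binary Shannon entropy H{p, 1-p} (base 2). -/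
def H2 (p : ℝ) : ℝ := shannon ![p, 1 - p]

/-- The two-outcome projective measurement (I ± n·σ)/2 along a direction n. -/
def projMeas (nv : Fin 3 → ℝ) : Fin 2 → Matrix (Fin 2) (Fin 2) ℂ := fun k =>
  (1 / 2 : ℝ) • ((1 : Matrix (Fin 2) (Fin 2) ℂ) +
    (if k = 0 then (1 : ℝ) else -1) • ∑ j, nv j • pauli j)

-- auxiliary lemmas added for the proof of stmt10
set_option maxHeartbeats 1000000 in
lemma projMeas_eq' (nv : Fin 3 → ℝ) (k : Fin 2) :
    projMeas nv k = !![((1 + (if k = 0 then (1:ℝ) else -1) * nv 2)/2 : ℂ),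
      (((if k = 0 then (1:ℝ) else -1) : ℂ) * (nv 0 - nv 1 * Complex.I))/2;
      (((if k = 0 then (1:ℝ) else -1) : ℂ) * (nv 0 + nv 1 * Complex.I))/2,
      ((1 - (if k = 0 then (1:ℝ) else -1) * nv 2)/2 : ℂ)] := by
  ext i j
  fin_cases i <;> fin_cases j <;> fin_cases k <;>
    simp [projMeas, pauli, Fin.sum_univ_three, Matrix.one_apply] <;> ring

lemma trace_projMeas' (nv : Fin 3 → ℝ) (k : Fin 2) : (projMeas nv k).trace = 1 := by
  rw [projMeas_eq']; simp [Matrix.trace_fin_two]; ring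

set_option maxHeartbeats 1000000 in
lemma trace_projMeas_pauli' (nv : Fin 3 → ℝ) (k : Fin 2) (j : Fin 3) :
    (projMeas nv k * pauli j).trace = (((if k = 0 then (1:ℝ) else -1) * nv j : ℝ) : ℂ) := by
  rw [projMeas_eq']
  fin_cases j <;> fin_cases k <;>
    simp [pauli, Matrix.trace_fin_two, Matrix.mul_apply, Fin.sum_univ_two] <;>
    push_cast <;> ring_nf <;> simp [Complex.I_sq] <;> ring_nf

set_option maxHeartbeats 1000000 in
lemma trace_meas' (r nA nB : Fin 3 → ℝ) (k l : Fin 2) :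
    ((projMeas nA k ⊗ₖ projMeas nB l) *
      ((1 / 4 : ℝ) • ((1 : Matrix ((Fin 2) × (Fin 2)) ((Fin 2) × (Fin 2)) ℂ) +
        ∑ j : Fin 3, r j • (pauli j ⊗ₖ pauli j)))).trace
    = (((1 + (if k = 0 then (1:ℝ) else -1) * (if l = 0 then (1:ℝ) else -1) *
        ∑ j, r j * nA j * nB j) / 4 : ℝ) : ℂ) := by
  rw [Matrix.mul_smul, Matrix.trace_smul, Matrix.mul_add, Matrix.mul_one,
    Matrix.trace_add, Finset.mul_sum]
  simp only [Matrix.mul_smul, Matrix.trace_smul, Matrix.trace_sum,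
    ← Matrix.mul_kronecker_mul, Matrix.trace_kronecker, trace_projMeas',
    trace_projMeas_pauli']
  simp only [Fin.sum_univ_three, Complex.real_smul]
  push_cast
  ring

lemma logb_half' : Real.logb 2 (1/2 : ℝ) = -1 := by
  rw [one_div, Real.logb_inv, Real.logb_self_eq_one (by norm_num)]

lemma helper4' (x : ℝ) (hx : 0 ≤ x) :
    x/4 * Real.logb 2 (x/4) = x/4 * Real.logb 2 (x/2) - x/4 := by
  rcases hx.eq_or_lt with h | h
  · simp [← h]
  · rw [show x/4 = (x/2)/2 by ring, Real.logb_div (by positivity) (by norm_num),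
      Real.logb_self_eq_one (by norm_num)]
    ring

lemma H2_eq' (p : ℝ) : H2 p = Real.binEntropy p / Real.log 2 := by
  simp [H2, shannon, Real.binEntropy, Real.logb, Fin.sum_univ_two, Real.log_inv]
  ring

lemma H2_sym' (d : ℝ) : H2 ((1 + d)/2) = H2 ((1 - d)/2) := by
  rw [H2_eq', H2_eq', show (1-d)/2 = 1 - (1+d)/2 by ring, Real.binEntropy_one_sub]

lemma binEntropy_mono' {x y : ℝ} (hx : 0 ≤ x) (hxy : x ≤ y) (hy : y ≤ 1) :
    Real.binEntropy ((1 + y)/2) ≤ Real.binEntropy ((1 + x)/2) := by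
  rcases hxy.eq_or_lt with h | h
  · rw [h]
  · exact (Real.binEntropy_strictAntiOn
      (Set.mem_Icc.mpr ⟨by linarith, by linarith⟩)
      (Set.mem_Icc.mpr ⟨by linarith, by linarith⟩) (by linarith)).le

lemma H2_mono' {x y : ℝ} (hx : 0 ≤ x) (hxy : x ≤ y) (hy : y ≤ 1) :
    H2 ((1 + y)/2) ≤ H2 ((1 + x)/2) := by
  rw [H2_eq', H2_eq']
  exact (div_le_div_iff_of_pos_right (Real.log_pos (by norm_num))).mpr (binEntropy_mono' hx hxy hy)

lemma cmi_sym' (a b : ℝ) (ha : 0 ≤ a) (hb : 0 ≤ b) (hab : a + b = 2)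
    (p : Fin 2 → Fin 2 → ℝ)
    (h00 : p 0 0 = a/4) (h01 : p 0 1 = b/4) (h10 : p 1 0 = b/4) (h11 : p 1 1 = a/4) :
    cMutualInfo p = 1 - H2 (a/2) := by
  have m1 : (fun i : Fin 2 => ∑ s, p i s) = fun _ => (1/2 : ℝ) := by
    funext i; fin_cases i <;>
      simp only [Fin.sum_univ_two, Fin.zero_eta, Fin.mk_one, Fin.isValue, h00, h01, h10, h11] <;>
      linarith
  have m2 : (fun s : Fin 2 => ∑ i, p i s) = fun _ => (1/2 : ℝ) := by
    funext s; fin_cases s <;>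
      simp only [Fin.sum_univ_two, Fin.zero_eta, Fin.mk_one, Fin.isValue, h00, h01, h10, h11] <;>
      linarith
  have hhalf : shannon (fun _ : Fin 2 => (1/2 : ℝ)) = 1 := by
    simp [shannon, Fin.sum_univ_two, logb_half']
  have hj : shannon (fun x : Fin 2 × Fin 2 => p x.1 x.2) = 1 + H2 (a/2) := by
    have h1a : (1 : ℝ) - a/2 = b/2 := by linarith
    rw [shannon, Fintype.sum_prod_type, Fin.sum_univ_two, Fin.sum_univ_two,
      Fin.sum_univ_two, h00, h01, h10, h11, helper4' a ha, helper4' b hb, H2]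
    simp only [shannon, Fin.sum_univ_two, Matrix.cons_val_zero, Matrix.cons_val_one,
      Matrix.head_cons, h1a]
    linarith
  rw [cMutualInfo, m1, m2, hhalf, hj]; ring

set_option maxHeartbeats 2000000 in
/-- measuring σ = (1/4)(I⊗I + Σ_j r_j σ_j⊗σ_j) with local
projective measurements (I ± n_A·σ)/2, (I ± n_B·σ)/2 gives the outcome
distribution (1 ± δ)/4 with δ = Σ_j r_j n_{Aj} n_{Bj}, classical mutual
information 1 − H{(1+δ)/2,(1−δ)/2}, and |δ| ≤ r_m := max_j |r_j|; the maximum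
over such local projective measurements is I^p_max = 1 − H{(1+r_m)/2,(1−r_m)/2}. -/
theorem stmt10 (r : Fin 3 → ℝ)
    (σ : Matrix ((Fin 2) × (Fin 2)) ((Fin 2) × (Fin 2)) ℂ)
    (hσ : σ = (1 / 4 : ℝ) • ((1 : Matrix ((Fin 2) × (Fin 2)) ((Fin 2) × (Fin 2)) ℂ) +
        ∑ j : Fin 3, r j • (pauli j ⊗ₖ pauli j)))
    (hds : σ.PosSemidef)
    (rm : ℝ) (hrm : rm = max |r 0| (max |r 1| |r 2|)) :
    (∀ (nA nB : Fin 3 → ℝ), ∑ j, (nA j) ^ 2 = 1 → ∑ j, (nB j) ^ 2 = 1 →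
      ∀ δ, δ = ∑ j, r j * nA j * nB j →
        (∀ k l, measProb σ (projMeas nA) (projMeas nB) k l =
            (1 + (if k = 0 then (1:ℝ) else -1) * (if l = 0 then (1:ℝ) else -1) * δ) / 4) ∧
        cMutualInfo (measProb σ (projMeas nA) (projMeas nB)) = 1 - H2 ((1 + δ) / 2) ∧
        |δ| ≤ rm ∧
        cMutualInfo (measProb σ (projMeas nA) (projMeas nB)) ≤ 1 - H2 ((1 + rm) / 2)) ∧
    (∃ nA nB : Fin 3 → ℝ, ∑ j, (nA j) ^ 2 = 1 ∧ ∑ j, (nB j) ^ 2 = 1 ∧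
        cMutualInfo (measProb σ (projMeas nA) (projMeas nB)) = 1 - H2 ((1 + rm) / 2)) := by
  subst hσ
  -- bounds |r j| ≤ 1 from positive semidefiniteness
  have h := fun (x : Fin 2 × Fin 2 → ℂ) => hds.dotProduct_mulVec_nonneg x
  have h1 := h (fun p => !![1,0;0,1] p.1 p.2)
  have h2 := h (fun p => !![1,0;0,-1] p.1 p.2)
  have h3 := h (fun p => !![0,1;1,0] p.1 p.2)
  have h4 := h (fun p => !![0,1;-1,0] p.1 p.2)
  simp only [Complex.le_def] at h1 h2 h3 h4
  simp [dotProduct, Matrix.mulVec, Fintype.sum_prod_type, Fin.sum_univ_two,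
    pauli, Fin.sum_univ_three, Matrix.one_apply, Matrix.kroneckerMap_apply,
    Complex.add_re, Complex.mul_re, Complex.ofReal_re, Complex.ofReal_im,
    Complex.zero_re] at h1 h2 h3 h4
  have hb0 : |r 0| ≤ 1 := abs_le.mpr ⟨by linarith, by linarith⟩
  have hb1 : |r 1| ≤ 1 := abs_le.mpr ⟨by linarith, by linarith⟩
  have hb2 : |r 2| ≤ 1 := abs_le.mpr ⟨by linarith, by linarith⟩
  have hrm0 : 0 ≤ rm := hrm ▸ (abs_nonneg _).trans (le_max_left _ _)
  have hrm1 : rm ≤ 1 := by rw [hrm]; exact max_le hb0 (max_le hb1 hb2)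
  have hjm : ∀ j, |r j| ≤ rm := by
    intro j; rw [hrm]; fin_cases j
    · exact le_max_left _ _
    · exact (le_max_left _ _).trans (le_max_right _ _)
    · exact (le_max_right _ _).trans (le_max_right _ _)
  have main : ∀ (nA nB : Fin 3 → ℝ), ∑ j, (nA j) ^ 2 = 1 → ∑ j, (nB j) ^ 2 = 1 →
      ∀ δ, δ = ∑ j, r j * nA j * nB j →
        (∀ k l, measProb ((1 / 4 : ℝ) • ((1 : Matrix ((Fin 2) × (Fin 2)) ((Fin 2) × (Fin 2)) ℂ) +
            ∑ j : Fin 3, r j • (pauli j ⊗ₖ pauli j))) (projMeas nA) (projMeas nB) k l =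
            (1 + (if k = 0 then (1:ℝ) else -1) * (if l = 0 then (1:ℝ) else -1) * δ) / 4) ∧
        cMutualInfo (measProb ((1 / 4 : ℝ) • ((1 : Matrix ((Fin 2) × (Fin 2)) ((Fin 2) × (Fin 2)) ℂ) +
            ∑ j : Fin 3, r j • (pauli j ⊗ₖ pauli j))) (projMeas nA) (projMeas nB)) = 1 - H2 ((1 + δ) / 2) ∧
        |δ| ≤ rm ∧
        cMutualInfo (measProb ((1 / 4 : ℝ) • ((1 : Matrix ((Fin 2) × (Fin 2)) ((Fin 2) × (Fin 2)) ℂ) +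
            ∑ j : Fin 3, r j • (pauli j ⊗ₖ pauli j))) (projMeas nA) (projMeas nB)) ≤ 1 - H2 ((1 + rm) / 2) := by
    intro nA nB hnA hnB δ hδ
    have hform : ∀ k l, measProb ((1 / 4 : ℝ) • ((1 : Matrix ((Fin 2) × (Fin 2)) ((Fin 2) × (Fin 2)) ℂ) +
        ∑ j : Fin 3, r j • (pauli j ⊗ₖ pauli j))) (projMeas nA) (projMeas nB) k l =
        (1 + (if k = 0 then (1:ℝ) else -1) * (if l = 0 then (1:ℝ) else -1) * δ) / 4 := by
      intro k l
      rw [measProb, trace_meas', Complex.ofReal_re, hδ]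
    have habs : |δ| ≤ rm := by
      have key : ∀ j : Fin 3, |r j * nA j * nB j| ≤ rm * ((nA j)^2 + (nB j)^2) / 2 := by
        intro j
        have hab : |nA j| * |nB j| ≤ ((nA j)^2 + (nB j)^2)/2 := by
          nlinarith [sq_nonneg (|nA j| - |nB j|), sq_abs (nA j), sq_abs (nB j)]
        have h1 : |r j * nA j * nB j| = |r j| * (|nA j| * |nB j|) := by
          rw [abs_mul, abs_mul, mul_assoc]
        rw [h1]
        have := mul_le_mul (hjm j) hab (by positivity) hrm0
        linarith
      have k0 := key 0; have k1 := key 1; have k2 := key 2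
      rw [Fin.sum_univ_three] at hδ hnA hnB
      calc |δ| ≤ |r 0 * nA 0 * nB 0| + |r 1 * nA 1 * nB 1| + |r 2 * nA 2 * nB 2| := by
            rw [hδ]; exact abs_add_three _ _ _
        _ ≤ rm := by nlinarith
    have hrange : 0 ≤ 1 + δ ∧ 0 ≤ 1 - δ := by
      have := abs_le.mp (habs.trans hrm1); constructor <;> linarith [this.1, this.2]
    have hcmi : cMutualInfo (measProb ((1 / 4 : ℝ) • ((1 : Matrix ((Fin 2) × (Fin 2)) ((Fin 2) × (Fin 2)) ℂ) +
        ∑ j : Fin 3, r j • (pauli j ⊗ₖ pauli j))) (projMeas nA) (projMeas nB)) = 1 - H2 ((1 + δ) / 2) := by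
      exact cmi_sym' (1 + δ) (1 - δ) hrange.1 hrange.2 (by ring) _
        (by rw [hform 0 0]; norm_num <;> ring_nf) (by rw [hform 0 1]; norm_num <;> ring_nf)
        (by rw [hform 1 0]; norm_num <;> ring_nf) (by rw [hform 1 1]; norm_num <;> ring_nf)
    refine ⟨hform, hcmi, habs, ?_⟩
    rw [hcmi]
    have hmono : H2 ((1 + rm)/2) ≤ H2 ((1 + δ)/2) := by
      rcases le_total 0 δ with hδ0 | hδ0
      · exact H2_mono' hδ0 ((le_abs_self δ).trans habs) hrm1
      · have : H2 ((1 + δ)/2) = H2 ((1 + (-δ))/2) := by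
          rw [H2_sym' δ]; ring_nf
        rw [this]
        exact H2_mono' (by linarith) ((neg_le_abs δ).trans habs) hrm1
    linarith
  refine ⟨main, ?_⟩
  -- existence: measure along the best axis
  have hex : ∃ j : Fin 3, rm = |r j| := by
    rw [hrm]
    rcases max_choice |r 0| (max |r 1| |r 2|) with h | h
    · exact ⟨0, h⟩
    · rcases max_choice |r 1| |r 2| with h' | h'
      · exact ⟨1, by rw [h, h']⟩
      · exact ⟨2, by rw [h, h']⟩
  obtain ⟨j, hj⟩ := hex
  set e : Fin 3 → ℝ := fun i => if i = j then 1 else 0 with he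
  have hsq : ∑ i, (e i) ^ 2 = 1 := by
    rw [Fin.sum_univ_three]; fin_cases j <;> simp [he]
  have hδe : (r j : ℝ) = ∑ i, r i * e i * e i := by
    rw [Fin.sum_univ_three]; fin_cases j <;> simp [he]
  obtain ⟨-, hcmi, -, -⟩ := main e e hsq hsq (r j) hδe
  refine ⟨e, e, hsq, hsq, ?_⟩
  rw [hcmi]
  rcases le_total 0 (r j) with hs | hs
  · rw [abs_of_nonneg hs] at hj; rw [hj]
  · rw [abs_of_nonpos hs] at hj
    rw [H2_sym' (r j), show (1 - r j)/2 = (1 + rm)/2 by rw [hj]; ring]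
end
end

section
/- If ρ_AB = Σ_i p_i |i⟩_A⟨i| ⊗ ρ_i^B with {|i⟩} an orthonormal basis of A, then the maximal classical mutual information over all local POVM measurements can be achieved with Alice projecting onto {|i⟩_A}: for any rank-one POVMs by Alice and Bob, the resulting classical mutual information is at most that obtained when Alice first projects onto {|i⟩} (data processing: the outcome of any other Alice POVM is a stochastic post-processing of i, independent of Bob's outcome). -/
open Matrix BigOperators
open scoped Kronecker Classical ComplexOrder

noncomputable section

/-- Orthonormal completeness: the rank-one projectors onto the family sum to
the identity (so the family is an orthonormal basis). -/
def IsONBasis {n ι : Type*} [Fintype n] [Fintype ι] [DecidableEq n] (v : ι → n → ℂ) : Prop :=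
  (∀ i j, ∑ x, star (v i x) * v j x = if i = j then 1 else 0) ∧
  ∑ i, Matrix.vecMulVec (v i) (star (v i)) = 1

/-- A rank-one POVM given by (not necessarily normalized) vectors |K_j⟩ with
Σ_j |K_j⟩⟨K_j| = I. -/
def IsRankOnePOVM {n ι : Type*} [Fintype n] [Fintype ι] [DecidableEq n]
    (K : ι → n → ℂ) : Prop :=
  ∑ j, Matrix.vecMulVec (K j) (star (K j)) = 1


/-! ### Auxiliary lemmas -/

private lemma mul_mul_log_mul' (x y : ℝ) :
    x * y * Real.log (x * y) = x * y * Real.log x + x * y * Real.log y := by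
  rcases eq_or_ne x 0 with h|h
  · simp [h]
  rcases eq_or_ne y 0 with h'|h'
  · simp [h']
  rw [Real.log_mul h h']; ring

private lemma gibbs' {τ : Type*} [Fintype τ] (a b : τ → ℝ) (ha : ∀ t, 0 ≤ a t)
    (hb : ∀ t, 0 ≤ b t) (hab : ∀ t, b t = 0 → a t = 0) (hsum : ∑ t, b t ≤ ∑ t, a t) :
    ∑ t, a t * Real.log (b t) ≤ ∑ t, a t * Real.log (a t) := by
  have key : ∀ t, a t * Real.log (b t) - a t * Real.log (a t) ≤ b t - a t := by
    intro t
    rcases eq_or_lt_of_le (ha t) with h|h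
    · have : a t = 0 := h.symm
      simp [this, hb t]
    · have hbt : 0 < b t := lt_of_le_of_ne (hb t) (fun h0 => by have := hab t h0.symm; linarith)
      calc a t * Real.log (b t) - a t * Real.log (a t)
          = a t * Real.log (b t / a t) := by
            rw [Real.log_div (ne_of_gt hbt) (ne_of_gt h)]; ring
        _ ≤ a t * (b t / a t - 1) :=
            mul_le_mul_of_nonneg_left (Real.log_le_sub_one_of_pos (div_pos hbt h)) (le_of_lt h)
        _ = b t - a t := by field_simp
  have h2 : ∑ t, (a t * Real.log (b t) - a t * Real.log (a t)) ≤ ∑ t, (b t - a t) :=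
    Finset.sum_le_sum (fun t _ => key t)
  rw [Finset.sum_sub_distrib, Finset.sum_sub_distrib] at h2
  linarith

private lemma star_ineq' {ι η κ : Type*} [Fintype ι] [Fintype η] [Fintype κ]
    (q : ι → κ → ℝ) (hq : ∀ i s, 0 ≤ q i s)
    (c : η → ι → ℝ) (hc : ∀ j i, 0 ≤ c j i) (hc1 : ∀ i, ∑ j, c j i = 1)
    (r : η → κ → ℝ) (hr : ∀ j s, r j s = ∑ i, c j i * q i s)
    (qI : ι → ℝ) (hqI : ∀ i, qI i = ∑ s, q i s)
    (rJ : η → ℝ) (hrJ : ∀ j, rJ j = ∑ s, r j s) :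
    (∑ j, ∑ s, r j s * Real.log (r j s)) - ∑ j, rJ j * Real.log (rJ j) ≤
    (∑ i, ∑ s, q i s * Real.log (q i s)) - ∑ i, qI i * Real.log (qI i) := by
  have hr0 : ∀ j s, 0 ≤ r j s := fun j s => by
    rw [hr]; exact Finset.sum_nonneg fun i _ => mul_nonneg (hc j i) (hq i s)
  have hqI0 : ∀ i, 0 ≤ qI i := fun i => by
    rw [hqI]; exact Finset.sum_nonneg fun s _ => hq i s
  have hrJ0 : ∀ j, 0 ≤ rJ j := fun j => by
    rw [hrJ]; exact Finset.sum_nonneg fun s _ => hr0 j s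
  have hqle : ∀ i s, q i s ≤ qI i := fun i s => by
    rw [hqI]; exact Finset.single_le_sum (fun s _ => hq i s) (Finset.mem_univ s)
  have hrle : ∀ i j s, c j i * q i s ≤ r j s := fun i j s => by
    rw [hr]; exact Finset.single_le_sum (fun i _ => mul_nonneg (hc j i) (hq i s)) (Finset.mem_univ i)
  have hrJle : ∀ j s, r j s ≤ rJ j := fun j s => by
    rw [hrJ]; exact Finset.single_le_sum (fun s _ => hr0 j s) (Finset.mem_univ s)
  set A : ι × η × κ → ℝ := fun t => c t.2.1 t.1 * q t.1 t.2.2 with hA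
  set B : ι × η × κ → ℝ := fun t => c t.2.1 t.1 * qI t.1 * (r t.2.1 t.2.2 / rJ t.2.1) with hB
  have hA0 : ∀ t, 0 ≤ A t := fun t => mul_nonneg (hc _ _) (hq _ _)
  have hB0 : ∀ t, 0 ≤ B t := fun t =>
    mul_nonneg (mul_nonneg (hc _ _) (hqI0 _)) (div_nonneg (hr0 _ _) (hrJ0 _))
  have habs : ∀ t, B t = 0 → A t = 0 := by
    rintro ⟨i, j, s⟩ hBt
    simp only [hB, hA] at *
    rcases mul_eq_zero.1 hBt with h1 | h2
    · rcases mul_eq_zero.1 h1 with h3 | h4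
      · rw [h3, zero_mul]
      · have : q i s = 0 := le_antisymm (h4 ▸ hqle i s) (hq i s)
        rw [this, mul_zero]
    · rcases div_eq_zero_iff.1 h2 with h3 | h4
      · have : c j i * q i s = 0 := le_antisymm (h3 ▸ hrle i j s) (hA0 (i, j, s))
        exact this
      · have hrjs : r j s = 0 := le_antisymm (h4 ▸ hrJle j s) (hr0 j s)
        have : c j i * q i s = 0 := le_antisymm (hrjs ▸ hrle i j s) (hA0 (i, j, s))
        exact this
  have hsumA : ∑ t, A t = ∑ j, rJ j := by
    simp only [hA, Fintype.sum_prod_type]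
    rw [Finset.sum_comm]
    refine Finset.sum_congr rfl fun j _ => ?_
    rw [hrJ, Finset.sum_comm]
    refine Finset.sum_congr rfl fun s _ => ?_
    rw [hr]
  have hsumB : ∑ t, B t ≤ ∑ t, A t := by
    rw [hsumA]
    simp only [hB, Fintype.sum_prod_type]
    rw [Finset.sum_comm]
    refine Finset.sum_le_sum fun j _ => ?_
    rcases eq_or_ne (rJ j) 0 with h0 | h0
    · have : ∀ i, ∑ s, c j i * qI i * (r j s / rJ j) = 0 := by
        intro i; simp [h0]
      simp only [this, Finset.sum_const_zero]
      exact hrJ0 j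
    · have : ∀ i, ∑ s, c j i * qI i * (r j s / rJ j) = c j i * qI i * (rJ j / rJ j) := by
        intro i
        rw [← Finset.mul_sum, ← Finset.sum_div, ← hrJ j]
      simp only [this, div_self h0, mul_one]
      have h5 : ∑ i, c j i * qI i = rJ j := by
        rw [hrJ]
        simp_rw [hr]
        rw [Finset.sum_comm]
        refine Finset.sum_congr rfl fun i _ => ?_
        rw [hqI, Finset.mul_sum]
      exact le_of_eq h5
  have hgibbs := gibbs' A B hA0 hB0 habs hsumB
  have eq1 : ∑ t, A t * Real.log (A t)
      = (∑ i, ∑ j, ∑ s, c j i * q i s * Real.log (c j i)) + ∑ i, ∑ s, q i s * Real.log (q i s) := by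
    simp only [hA, Fintype.sum_prod_type]
    simp_rw [mul_mul_log_mul']
    simp only [Finset.sum_add_distrib]
    congr 1
    refine Finset.sum_congr rfl fun i _ => ?_
    rw [Finset.sum_comm]
    refine Finset.sum_congr rfl fun s _ => ?_
    simp_rw [mul_assoc]
    rw [← Finset.sum_mul, hc1, one_mul]
  have hterm : ∀ i j s, c j i * q i s * Real.log (c j i * qI i * (r j s / rJ j)) =
      c j i * q i s * Real.log (c j i) + c j i * q i s * Real.log (qI i) +
      (c j i * q i s * Real.log (r j s) - c j i * q i s * Real.log (rJ j)) := by
    intro i j s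
    rcases eq_or_ne (c j i * q i s) 0 with h | h
    · rw [h]; ring
    · have hc0 : c j i ≠ 0 := fun h' => h (by rw [h', zero_mul])
      have hq0 : q i s ≠ 0 := fun h' => h (by rw [h', mul_zero])
      have hcp : 0 < c j i := lt_of_le_of_ne (hc j i) (Ne.symm hc0)
      have hqp : 0 < q i s := lt_of_le_of_ne (hq i s) (Ne.symm hq0)
      have hqIp : 0 < qI i := lt_of_lt_of_le hqp (hqle i s)
      have hrp : 0 < r j s := lt_of_lt_of_le (mul_pos hcp hqp) (hrle i j s)
      have hrJp : 0 < rJ j := lt_of_lt_of_le hrp (hrJle j s)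
      rw [Real.log_mul (mul_ne_zero hc0 (ne_of_gt hqIp)) (ne_of_gt (div_pos hrp hrJp)),
        Real.log_mul hc0 (ne_of_gt hqIp), Real.log_div (ne_of_gt hrp) (ne_of_gt hrJp)]
      ring
  have eq2 : ∑ t, A t * Real.log (B t)
      = (∑ i, ∑ j, ∑ s, c j i * q i s * Real.log (c j i)) + (∑ i, qI i * Real.log (qI i))
        + ((∑ j, ∑ s, r j s * Real.log (r j s)) - ∑ j, rJ j * Real.log (rJ j)) := by
    simp only [hA, hB, Fintype.sum_prod_type]
    simp_rw [hterm]
    simp only [Finset.sum_add_distrib, Finset.sum_sub_distrib]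
    congr 1
    · congr 1
      refine Finset.sum_congr rfl fun i _ => ?_
      simp_rw [mul_assoc, ← Finset.mul_sum, ← Finset.sum_mul (f := fun s => q i s), ← hqI]
      rw [← Finset.sum_mul, hc1, one_mul]
    · congr 1
      · rw [Finset.sum_comm]
        refine Finset.sum_congr rfl fun j _ => ?_
        rw [Finset.sum_comm]
        refine Finset.sum_congr rfl fun s _ => ?_
        rw [← Finset.sum_mul, ← hr]
      · rw [Finset.sum_comm]
        refine Finset.sum_congr rfl fun j _ => ?_
        simp_rw [← Finset.sum_mul]
        congr 1
        rw [hrJ]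
        simp_rw [hr]
        rw [Finset.sum_comm]
  linarith [hgibbs, eq1, eq2]

private lemma cMI_eq' {ι κ : Type*} [Fintype ι] [Fintype κ] (p : ι → κ → ℝ) :
    cMutualInfo p = ((∑ i, ∑ s, p i s * Real.log (p i s))
      - (∑ i, (∑ s, p i s) * Real.log (∑ s, p i s))
      - (∑ s, (∑ i, p i s) * Real.log (∑ i, p i s))) / Real.log 2 := by
  have h2 : Real.log 2 ≠ 0 := ne_of_gt (Real.log_pos one_lt_two)
  unfold cMutualInfo shannon
  simp only [Real.logb, div_eq_mul_inv, Fintype.sum_prod_type]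
  simp only [← mul_assoc]
  simp only [← Finset.sum_mul]
  ring

private lemma dpi' {ι η κ : Type*} [Fintype ι] [Fintype η] [Fintype κ]
    (q : ι → κ → ℝ) (hq : ∀ i s, 0 ≤ q i s)
    (c : η → ι → ℝ) (hc : ∀ j i, 0 ≤ c j i) (hc1 : ∀ i, ∑ j, c j i = 1) :
    cMutualInfo (fun j s => ∑ i, c j i * q i s) ≤ cMutualInfo q := by
  have hstar := star_ineq' q hq c hc hc1 (fun j s => ∑ i, c j i * q i s) (fun _ _ => rfl)
    (fun i => ∑ s, q i s) (fun _ => rfl) (fun j => ∑ s, ∑ i, c j i * q i s) (fun _ => rfl)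
  have hmarg : ∀ s, ∑ j, ∑ i, c j i * q i s = ∑ i, q i s := by
    intro s
    rw [Finset.sum_comm]
    refine Finset.sum_congr rfl fun i _ => ?_
    rw [← Finset.sum_mul, hc1, one_mul]
  rw [cMI_eq', cMI_eq']
  have hlog2 : (0:ℝ) < Real.log 2 := Real.log_pos one_lt_two
  apply (div_le_div_iff_of_pos_right hlog2).mpr
  have hm2 : (∑ s, (∑ j, ∑ i, c j i * q i s) * Real.log (∑ j, ∑ i, c j i * q i s))
      = ∑ s, (∑ i, q i s) * Real.log (∑ i, q i s) := by simp_rw [hmarg]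
  linarith [hstar, hm2]

private lemma trace_vmv_mul_vmv' {n : Type*} [Fintype n] (v w : n → ℂ) :
    (vecMulVec v (star v) * vecMulVec w (star w)).trace
      = star (∑ x, star (v x) * w x) * (∑ x, star (v x) * w x) := by
  simp only [Matrix.trace, Matrix.diag, Matrix.mul_apply, vecMulVec_apply, Pi.star_apply,
    star_sum, star_mul', star_star]
  rw [Finset.sum_mul]
  refine Finset.sum_congr rfl fun x _ => ?_
  rw [Finset.mul_sum]
  refine Finset.sum_congr rfl fun y _ => ?_
  ring

private lemma trace_vmv_mul' {n : Type*} [Fintype n] (v : n → ℂ) (ρ : Matrix n n ℂ) :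
    (vecMulVec v (star v) * ρ).trace = dotProduct (star v) (ρ *ᵥ v) := by
  simp only [Matrix.trace, Matrix.diag, Matrix.mul_apply, vecMulVec_apply, Pi.star_apply,
    dotProduct, mulVec, Finset.mul_sum]
  rw [Finset.sum_comm]
  refine Finset.sum_congr rfl fun x _ => Finset.sum_congr rfl fun y _ => ?_
  ring

/-- for ρ_AB = Σ_i p_i |i⟩_A⟨i| ⊗ ρ_i^B with {|i⟩} an orthonormal
basis of A, the classical mutual information obtained with any rank-one POVMs of
Alice and Bob is at most the one obtained when Alice instead projects onto the
basis {|i⟩} (data processing); hence Alice's optimal strategy is to project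
onto {|i⟩}. -/
theorem stmt15 {a b ι η κ : Type*} [Fintype a] [Fintype b] [Fintype ι] [Fintype η]
    [Fintype κ] [DecidableEq a] [DecidableEq b]
    (p : ι → ℝ) (hp : ∀ i, 0 ≤ p i) (hp1 : ∑ i, p i = 1)
    (e : ι → a → ℂ) (he : IsONBasis e)
    (ρB : ι → Matrix b b ℂ) (hρB : ∀ i, IsDensityMatrix (ρB i))
    (ρ : Matrix (a × b) (a × b) ℂ)
    (hρ : ρ = ∑ i, p i • (Matrix.vecMulVec (e i) (star (e i)) ⊗ₖ ρB i))
    (KA : η → a → ℂ) (hKA : IsRankOnePOVM KA)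
    (KB : κ → b → ℂ) (hKB : IsRankOnePOVM KB) :
    cMutualInfo (measProb ρ (fun j => Matrix.vecMulVec (KA j) (star (KA j)))
                            (fun s => Matrix.vecMulVec (KB s) (star (KB s)))) ≤
    cMutualInfo (measProb ρ (fun i => Matrix.vecMulVec (e i) (star (e i)))
                            (fun s => Matrix.vecMulVec (KB s) (star (KB s)))) := by
  obtain ⟨horth, hcomp⟩ := he
  have hexp : ∀ (M : Matrix a a ℂ) (N : Matrix b b ℂ),
      ((M ⊗ₖ N) * ρ).trace
        = ∑ i, (p i : ℂ) * ((M * vecMulVec (e i) (star (e i))).trace * (N * ρB i).trace) := by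
    intro M N
    rw [hρ, Matrix.mul_sum, Matrix.trace_sum]
    refine Finset.sum_congr rfl fun i _ => ?_
    rw [Matrix.mul_smul, Matrix.trace_smul, ← Matrix.mul_kronecker_mul, Matrix.trace_kronecker]
    exact Complex.real_smul
  have hB_psd : ∀ i s, (0:ℂ) ≤ (vecMulVec (KB s) (star (KB s)) * ρB i).trace := by
    intro i s
    rw [trace_vmv_mul']
    exact (hρB i).1.dotProduct_mulVec_nonneg (KB s)
  have htreal : ∀ i s, (vecMulVec (KB s) (star (KB s)) * ρB i).trace
      = (((vecMulVec (KB s) (star (KB s)) * ρB i).trace.re : ℝ) : ℂ) := by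
    intro i s
    have him := (Complex.le_def.mp (hB_psd i s)).2
    exact Complex.ext rfl (by simpa using him.symm)
  have hq_eq : measProb ρ (fun i => Matrix.vecMulVec (e i) (star (e i)))
      (fun s => Matrix.vecMulVec (KB s) (star (KB s)))
      = fun i s => p i * (vecMulVec (KB s) (star (KB s)) * ρB i).trace.re := by
    funext i s
    show ((vecMulVec (e i) (star (e i)) ⊗ₖ vecMulVec (KB s) (star (KB s))) * ρ).trace.re = _
    rw [hexp]
    have hdelta : ∀ i', (vecMulVec (e i) (star (e i)) * vecMulVec (e i') (star (e i'))).trace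
        = if i = i' then 1 else 0 := by
      intro i'
      rw [trace_vmv_mul_vmv', horth i i']
      split_ifs <;> simp
    simp_rw [hdelta]
    simp only [ite_mul, one_mul, zero_mul, mul_ite, mul_zero]
    rw [Finset.sum_ite_eq, if_pos (Finset.mem_univ i), Complex.re_ofReal_mul]
  have hctr : ∀ j i, (vecMulVec (KA j) (star (KA j)) * vecMulVec (e i) (star (e i))).trace
      = ((Complex.normSq (∑ x, star (KA j x) * e i x) : ℝ) : ℂ) := by
    intro j i
    rw [trace_vmv_mul_vmv', Complex.normSq_eq_conj_mul_self]
    rfl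
  have hr_eq : measProb ρ (fun j => Matrix.vecMulVec (KA j) (star (KA j)))
      (fun s => Matrix.vecMulVec (KB s) (star (KB s)))
      = fun j s => ∑ i, Complex.normSq (∑ x, star (KA j x) * e i x)
          * (p i * (vecMulVec (KB s) (star (KB s)) * ρB i).trace.re) := by
    funext j s
    show ((vecMulVec (KA j) (star (KA j)) ⊗ₖ vecMulVec (KB s) (star (KB s))) * ρ).trace.re = _
    rw [hexp, Complex.re_sum]
    refine Finset.sum_congr rfl fun i _ => ?_
    rw [hctr, htreal i s]
    simp only [← Complex.ofReal_mul, Complex.ofReal_re]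
    ring
  have hc1 : ∀ i, ∑ j, Complex.normSq (∑ x, star (KA j x) * e i x) = 1 := by
    intro i
    have h1 : ∑ j, (vecMulVec (KA j) (star (KA j)) * vecMulVec (e i) (star (e i))).trace = 1 := by
      rw [← Matrix.trace_sum, ← Matrix.sum_mul, hKA, one_mul]
      have htr : (vecMulVec (e i) (star (e i))).trace = ∑ x, e i x * star (e i x) := by
        simp [Matrix.trace, Matrix.diag, vecMulVec_apply]
      rw [htr]
      have h2 := horth i i
      rw [if_pos rfl] at h2
      calc ∑ x, e i x * star (e i x) = ∑ x, star (e i x) * e i x :=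
            Finset.sum_congr rfl fun x _ => mul_comm _ _
        _ = 1 := h2
    simp_rw [hctr] at h1
    exact_mod_cast h1
  rw [hq_eq, hr_eq]
  exact dpi' (fun i s => p i * (vecMulVec (KB s) (star (KB s)) * ρB i).trace.re)
    (fun i s => mul_nonneg (hp i) (by simpa using (Complex.le_def.mp (hB_psd i s)).1))
    (fun j i => Complex.normSq (∑ x, star (KA j x) * e i x))
    (fun j i => Complex.normSq_nonneg _) hc1
end
end

section
/- Suppose Bob performs an arbitrary POVM on B, and Alice performs a projective measurement on A (dimension d_A) in one of two mutually unbiased bases, giving classical mutual informations I₁{A:B} and I₂{A:B} with Bob's outcome. Then I₁{A:B} + I₂{A:B} ≤ log₂ d_A. -/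
open Matrix BigOperators
open scoped Kronecker Classical ComplexOrder

noncomputable section

namespace Stmt16Aux

def Hn {ι : Type*} [Fintype ι] (p : ι → ℝ) : ℝ := ∑ i, Real.negMulLog (p i)

lemma shannon_eq_Hn {ι : Type*} [Fintype ι] (p : ι → ℝ) :
    shannon p = Hn p / Real.log 2 := by
  rw [shannon, Hn, Finset.sum_div, ← Finset.sum_neg_distrib]
  refine Finset.sum_congr rfl fun i _ => ?_
  rw [Real.negMulLog, Real.logb]
  ring

lemma Hn_scale {ι : Type*} [Fintype ι] (u : ι → ℝ) (hu : ∀ i, 0 ≤ u i) :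
    Hn u = Real.negMulLog (∑ i, u i) + (∑ i, u i) * Hn (fun i => u i / ∑ i', u i') := by
  by_cases h : ∑ i, u i = 0
  · have hz : ∀ i ∈ Finset.univ, u i = 0 := by
      intro i hi
      exact (Finset.sum_eq_zero_iff_of_nonneg (fun j _ => hu j)).mp h i hi
    have : Hn u = 0 := by
      rw [Hn]; apply Finset.sum_eq_zero; intro i hi; rw [hz i hi]; simp
    rw [this, h]; simp
  · set Q := ∑ i, u i with hQ
    have hsum : ∑ i, u i / Q = 1 := by
      rw [← Finset.sum_div, ← hQ, div_self h]
    have : ∀ i, Real.negMulLog (u i)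
        = (u i / Q) * Real.negMulLog Q + Q * Real.negMulLog (u i / Q) := by
      intro i
      have : u i = Q * (u i / Q) := by field_simp
      nth_rewrite 1 [this]
      exact Real.negMulLog_mul Q (u i / Q)
    rw [Hn]
    calc ∑ i, Real.negMulLog (u i)
        = ∑ i, ((u i / Q) * Real.negMulLog Q + Q * Real.negMulLog (u i / Q)) := by
          exact Finset.sum_congr rfl fun i _ => this i
      _ = (∑ i, u i / Q) * Real.negMulLog Q + Q * ∑ i, Real.negMulLog (u i / Q) := by
          rw [Finset.sum_add_distrib, ← Finset.sum_mul, ← Finset.mul_sum]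
      _ = Real.negMulLog Q + Q * Hn (fun i => u i / Q) := by
          rw [hsum, one_mul, Hn]

lemma Hn_chain {ι κ : Type*} [Fintype ι] [Fintype κ] (p : ι → κ → ℝ)
    (hp : ∀ i s, 0 ≤ p i s) :
    Hn (fun x : ι × κ => p x.1 x.2)
      = Hn (fun s => ∑ i, p i s)
        + ∑ s, (∑ i, p i s) * Hn (fun i => p i s / ∑ i', p i' s) := by
  have h1 : Hn (fun x : ι × κ => p x.1 x.2) = ∑ s, ∑ i, Real.negMulLog (p i s) := by
    rw [Hn, Fintype.sum_prod_type]
    exact Finset.sum_comm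
  rw [h1, Hn]
  rw [← Finset.sum_add_distrib]
  refine Finset.sum_congr rfl fun s _ => ?_
  exact Hn_scale (fun i => p i s) (fun i => hp i s)

lemma Hn_le_log_card {ι : Type*} [Fintype ι] (p : ι → ℝ)
    (h0 : ∀ i, 0 ≤ p i) (h1 : ∑ i, p i = 1) :
    Hn p ≤ Real.log (Fintype.card ι) := by
  classical
  set S := Finset.univ.filter (fun i => p i ≠ 0) with hS
  have hsub : ∀ (f : ι → ℝ), (∀ i, p i = 0 → f i = 0) → ∑ i ∈ S, f i = ∑ i, f i := by
    intro f hf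
    refine Finset.sum_subset (Finset.subset_univ S) ?_
    intro x _ hx
    have : p x = 0 := by
      by_contra hc
      exact hx (Finset.mem_filter.mpr ⟨Finset.mem_univ x, hc⟩)
    exact hf x this
  have hsumS : ∑ i ∈ S, p i = 1 := by
    rw [← h1]; exact hsub (fun i => p i) (fun i h => h)
  have hSpos : ∀ i ∈ S, 0 < p i := by
    intro i hi
    rcases (h0 i).lt_or_eq with h | h
    · exact h
    · exact absurd h.symm (Finset.mem_filter.mp hi).2
  have hHn : Hn p = ∑ i ∈ S, p i * Real.log (p i)⁻¹ := by
    rw [Hn, ← hsub (fun i => Real.negMulLog (p i)) (fun i h => by simp [Real.negMulLog, h])]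
    exact Finset.sum_congr rfl fun i hi => by
      rw [Real.negMulLog, Real.log_inv]; ring
  have hjensen := (StrictConcaveOn.concaveOn strictConcaveOn_log_Ioi).le_map_sum
    (t := S) (w := fun i => p i) (p := fun i => (p i)⁻¹)
    (fun i hi => h0 i) hsumS (fun i hi => Set.mem_Ioi.mpr (inv_pos.mpr (hSpos i hi)))
  have hval : ∑ i ∈ S, p i • (p i)⁻¹ = (S.card : ℝ) := by
    rw [Finset.sum_congr rfl (fun i hi => by
      rw [smul_eq_mul, mul_inv_cancel₀ (ne_of_gt (hSpos i hi))])]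
    simp
  have h2 : ∑ i ∈ S, p i • Real.log (p i)⁻¹ ≤ Real.log (S.card : ℝ) := by
    rw [← hval]; exact hjensen
  have h3 : Hn p ≤ Real.log (S.card : ℝ) := by
    rw [hHn]
    simpa [smul_eq_mul] using h2
  refine h3.trans (Real.log_le_log ?_ ?_)
  · have : S.Nonempty := by
      by_contra hne
      rw [Finset.not_nonempty_iff_eq_empty] at hne
      rw [hne] at hsumS; simp at hsumS
    exact_mod_cast Finset.card_pos.mpr this
  · exact_mod_cast Finset.card_le_univ S

lemma Hn_nonneg {ι : Type*} [Fintype ι] (p : ι → ℝ)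
    (h0 : ∀ i, 0 ≤ p i) (h1 : ∀ i, p i ≤ 1) : 0 ≤ Hn p := by
  apply Finset.sum_nonneg
  intro i _
  exact Real.negMulLog_nonneg (h0 i) (h1 i)


/-- The analytic building block `c ↦ (phase c) * ‖c‖ ^ ((1+z)*α)`. -/
def Ef (α : ℝ) (c : ℂ) (z : ℂ) : ℂ :=
  if c = 0 then 0 else (c / ‖c‖) * Complex.exp (((1 + z) * (α : ℂ)) * (Real.log ‖c‖ : ℂ))

lemma Ef_diff (α : ℝ) (c : ℂ) : Differentiable ℂ (Ef α c) := by
  unfold Ef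
  by_cases h : c = 0
  · simp only [h, if_true, reduceIte]
    exact differentiable_const 0
  · simp only [h, if_false]
    apply Differentiable.const_mul
    apply Differentiable.cexp
    apply Differentiable.mul_const
    apply Differentiable.mul_const
    exact (differentiable_const _).add differentiable_id

lemma Ef_norm (α : ℝ) (hα : 0 < α) (c : ℂ) (z : ℂ) (hz : 0 ≤ z.re) :
    ‖Ef α c z‖ = ‖c‖ ^ ((1 + z.re) * α) := by
  have hexp : (0:ℝ) < (1 + z.re) * α := by positivity
  unfold Ef
  by_cases h : c = 0
  · simp [h, Real.zero_rpow (ne_of_gt hexp)]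
  · have hc : (0:ℝ) < ‖c‖ := norm_pos_iff.mpr h
    have h1 : ‖(c / (‖c‖ : ℂ))‖ = 1 := by
      rw [norm_div]
      rw [Complex.norm_real, Real.norm_eq_abs, abs_of_pos hc, div_self (ne_of_gt hc)]
    have h2 : (((1 + z) * (α : ℂ)) * (Real.log ‖c‖ : ℂ)).re
        = (1 + z.re) * α * Real.log ‖c‖ := by
      simp [Complex.mul_re, Complex.add_re, Complex.add_im, Complex.ofReal_re,
        Complex.ofReal_im]
    rw [if_neg h, norm_mul, h1, one_mul, Complex.norm_exp, h2,
      Real.rpow_def_of_pos hc]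
    ring_nf

lemma Ef_eval (α : ℝ) (c : ℂ) (t : ℝ) (h : (1 + t) * α = 1) :
    Ef α c (t : ℂ) = c := by
  unfold Ef
  by_cases hc : c = 0
  · simp [hc]
  · have hcn : (0:ℝ) < ‖c‖ := norm_pos_iff.mpr hc
    have : ((1 + (t:ℂ)) * (α : ℂ)) = 1 := by
      have := congrArg (fun x : ℝ => (x : ℂ)) h
      push_cast at this
      simpa using this
    rw [if_neg hc, this, one_mul, ← Complex.ofReal_exp, Real.exp_log hcn]
    rw [div_mul_cancel₀]
    simpa using ne_of_gt hcn

lemma Ef_norm_le (α : ℝ) (hα : 0 < α) (hα1 : α ≤ 1) (c : ℂ) (z : ℂ)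
    (hz0 : 0 ≤ z.re) (hz1 : z.re ≤ 1) :
    ‖Ef α c z‖ ≤ max 1 (‖c‖ ^ (2:ℕ)) := by
  rw [Ef_norm α hα c z hz0]
  rcases le_or_gt ‖c‖ 1 with h | h
  · exact le_max_of_le_left (Real.rpow_le_one (norm_nonneg c) h (by positivity))
  · refine le_max_of_le_right ?_
    have : ‖c‖ ^ ((1 + z.re) * α) ≤ ‖c‖ ^ (2:ℝ) := by
      apply Real.rpow_le_rpow_of_exponent_le h.le
      nlinarith
    calc ‖c‖ ^ ((1 + z.re) * α) ≤ ‖c‖ ^ (2:ℝ) := this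
      _ = ‖c‖ ^ (2:ℕ) := by
        rw [show ((2:ℝ) = ((2:ℕ):ℝ)) by norm_num, Real.rpow_natCast]

lemma stepA (d : ℕ) (hd : 0 < d) (U : Fin d → Fin d → ℂ)
    (hUc : ∀ j i, ‖U j i‖ ≤ (d : ℝ) ^ (-(1/2 : ℝ)))
    (hUiso : ∀ v : Fin d → ℂ, ∑ j, ‖∑ i, U j i * v i‖ ^ 2 = ∑ i, ‖v i‖ ^ 2)
    (a : Fin d → ℂ) (t : ℝ) (ht0 : 0 ≤ t) (ht1 : t < 1) :
    (∑ j, ‖∑ i, U j i * a i‖ ^ (2 / (1 - t))) ^ ((1 - t) / 2)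
      ≤ (d : ℝ) ^ (-(t / 2)) * (∑ i, ‖a i‖ ^ (2 / (1 + t))) ^ ((1 + t) / 2) := by
  have h2nat : ∀ x : ℝ, x ^ (2:ℝ) = x ^ (2:ℕ) := fun x => by
    rw [show ((2:ℝ) = ((2:ℕ):ℝ)) by norm_num, Real.rpow_natCast]
  rcases ht0.eq_or_lt with h0 | htpos
  · simp only [← h0, sub_zero, add_zero, neg_zero, zero_div, Real.rpow_zero, one_mul, div_one]
    simp only [h2nat]
    rw [hUiso a]
  have h1t : (0:ℝ) < 1 - t := by linarith
  have h1t' : (0:ℝ) < 1 + t := by linarith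
  have hq2 : 2 < 2 / (1 - t) := by rw [lt_div_iff₀ h1t]; nlinarith
  set q : ℝ := 2 / (1 - t) with hq
  set qc : ℝ := 2 / (1 + t) with hqc
  set α : ℝ := 1 / (1 + t) with hα
  have hαpos : 0 < α := by positivity
  have hα1 : α ≤ 1 := by rw [hα, div_le_one h1t']; linarith
  have hα2 : α * 2 = qc := by rw [hα, hqc]; ring
  have h1α : (1 + t) * α = 1 := by rw [hα]; field_simp
  set c : ℝ := (d : ℝ) ^ (-(1/2 : ℝ)) with hc_def
  have hc_nonneg : 0 ≤ c := Real.rpow_nonneg (Nat.cast_nonneg d) _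
  have hd1 : (1:ℝ) ≤ (d:ℝ) := by exact_mod_cast hd
  have hc_le_one : c ≤ 1 := Real.rpow_le_one_of_one_le_of_nonpos hd1 (by norm_num)
  set b : Fin d → ℂ := fun j => ∑ i, U j i * a i with hb
  set Sq : ℝ := ∑ j, ‖b j‖ ^ q with hSq
  set Sp : ℝ := ∑ i, ‖a i‖ ^ qc with hSp
  have hSq_nonneg : 0 ≤ Sq :=
    Finset.sum_nonneg fun j _ => Real.rpow_nonneg (norm_nonneg _) _
  have hSp_nonneg : 0 ≤ Sp :=
    Finset.sum_nonneg fun i _ => Real.rpow_nonneg (norm_nonneg _) _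
  show Sq ^ ((1 - t) / 2) ≤ (d : ℝ) ^ (-(t / 2)) * Sp ^ ((1 + t) / 2)
  rcases hSq_nonneg.eq_or_lt with hSq0 | hSqpos
  · rw [← hSq0, Real.zero_rpow (by positivity)]
    exact mul_nonneg (Real.rpow_nonneg (Nat.cast_nonneg d) _)
      (Real.rpow_nonneg hSp_nonneg _)
  -- the dual vector
  set w : Fin d → ℂ := fun j => (starRingEnd ℂ) (b j) * ((‖b j‖ ^ (q - 2) : ℝ) : ℂ) with hw
  have hwnorm : ∀ j, ‖w j‖ = ‖b j‖ ^ (q - 1) := by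
    intro j
    by_cases hbj : b j = 0
    · simp [hw, hbj, Real.zero_rpow (show q - 1 ≠ 0 by intro h; nlinarith)]
    · have hbn : 0 < ‖b j‖ := norm_pos_iff.mpr hbj
      have : ‖w j‖ = ‖b j‖ * ‖b j‖ ^ (q - 2) := by
        rw [hw]
        simp only [norm_mul, RCLike.norm_conj, Complex.norm_real, Real.norm_eq_abs]
        rw [abs_of_nonneg (Real.rpow_nonneg (norm_nonneg _) _)]
      rw [this]
      nth_rewrite 1 [← Real.rpow_one ‖b j‖]
      rw [← Real.rpow_add hbn]
      ring_nf
  have hwq : ∀ j, ‖w j‖ ^ qc = ‖b j‖ ^ q := by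
    intro j
    rw [hwnorm j, ← Real.rpow_mul (norm_nonneg _)]
    congr 1
    rw [hq, hqc]
    field_simp
    ring
  have hwb : ∀ j, w j * b j = ((‖b j‖ ^ q : ℝ) : ℂ) := by
    intro j
    by_cases hbj : b j = 0
    · simp [hw, hbj, Real.zero_rpow (show q ≠ 0 by positivity)]
    · have hbn : 0 < ‖b j‖ := norm_pos_iff.mpr hbj
      have h1 : w j * b j = (b j * (starRingEnd ℂ) (b j)) * ((‖b j‖ ^ (q - 2) : ℝ) : ℂ) := by
        rw [hw]; ring
      rw [h1, Complex.mul_conj]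
      have h2 : (Complex.normSq (b j) : ℝ) = ‖b j‖ ^ (2:ℝ) := by
        rw [h2nat, ← Complex.sq_norm]
      rw [← Complex.ofReal_mul]
      congr 1
      rw [h2, ← Real.rpow_add hbn]
      ring_nf
  -- the analytic family
  set F : ℂ → ℂ := fun z => ∑ j, Ef α (w j) z * ∑ i, U j i * Ef α (a i) z with hF
  have hFdiff : Differentiable ℂ F := by
    apply Differentiable.fun_sum
    intro j _
    exact (Ef_diff α (w j)).mul <| Differentiable.fun_sum fun i _ =>
      (differentiable_const (U j i)).mul (Ef_diff α (a i))
  have hA2 : ∀ z : ℂ, z.re = 0 → ∀ i, ‖Ef α (a i) z‖ ^ (2:ℕ) = ‖a i‖ ^ qc := by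
    intro z hz i
    rw [Ef_norm α hαpos _ z (by rw [hz]), hz, add_zero, one_mul,
      ← Real.rpow_natCast (‖a i‖ ^ α) 2, ← Real.rpow_mul (norm_nonneg _)]
    rw [show ((2:ℕ):ℝ) = (2:ℝ) by norm_num, hα2]
  have hW2 : ∀ z : ℂ, z.re = 0 → ∀ j, ‖Ef α (w j) z‖ ^ (2:ℕ) = ‖b j‖ ^ q := by
    intro z hz j
    rw [Ef_norm α hαpos _ z (by rw [hz]), hz, add_zero, one_mul,
      ← Real.rpow_natCast (‖w j‖ ^ α) 2, ← Real.rpow_mul (norm_nonneg _)]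
    rw [show ((2:ℕ):ℝ) = (2:ℝ) by norm_num, hα2, hwq]
  have hA1 : ∀ z : ℂ, z.re = 1 → ∀ i, ‖Ef α (a i) z‖ = ‖a i‖ ^ qc := by
    intro z hz i
    rw [Ef_norm α hαpos _ z (by rw [hz]; norm_num), hz, ← hα2]
    norm_num
    ring_nf
  have hW1 : ∀ z : ℂ, z.re = 1 → ∀ j, ‖Ef α (w j) z‖ = ‖b j‖ ^ q := by
    intro z hz j
    rw [Ef_norm α hαpos _ z (by rw [hz]; norm_num), hz, ← hwq j, ← hα2]
    norm_num
    ring_nf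
  have hedge0 : ∀ z ∈ Complex.re ⁻¹' {0}, ‖F z‖ ≤ Real.sqrt Sq * Real.sqrt Sp := by
    intro z hz
    have hz0 : z.re = 0 := hz
    have h1 : ‖F z‖ ≤ ∑ j, ‖Ef α (w j) z‖ * ‖∑ i, U j i * Ef α (a i) z‖ := by
      refine (norm_sum_le _ _).trans ?_
      refine Finset.sum_le_sum fun j _ => ?_
      rw [norm_mul]
    have hgs : ∑ j, ‖∑ i, U j i * Ef α (a i) z‖ ^ (2:ℕ) = Sp := by
      rw [hUiso (fun i => Ef α (a i) z), hSp]
      exact Finset.sum_congr rfl fun i _ => hA2 z hz0 i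
    have hws : ∑ j, ‖Ef α (w j) z‖ ^ (2:ℕ) = Sq := by
      rw [hSq]; exact Finset.sum_congr rfl fun j _ => hW2 z hz0 j
    have hCS := Finset.sum_mul_sq_le_sq_mul_sq Finset.univ
      (fun j => ‖Ef α (w j) z‖) (fun j => ‖∑ i, U j i * Ef α (a i) z‖)
    rw [hgs, hws] at hCS
    have hS_nonneg : 0 ≤ ∑ j, ‖Ef α (w j) z‖ * ‖∑ i, U j i * Ef α (a i) z‖ :=
      Finset.sum_nonneg fun j _ => mul_nonneg (norm_nonneg _) (norm_nonneg _)
    refine h1.trans ?_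
    have := Real.sqrt_le_sqrt hCS
    rw [Real.sqrt_sq hS_nonneg] at this
    rw [← Real.sqrt_mul hSq_nonneg]
    exact this
  have hedge1 : ∀ z ∈ Complex.re ⁻¹' {1}, ‖F z‖ ≤ c * Sq * Sp := by
    intro z hz
    have hz1 : z.re = 1 := hz
    have h1 : ‖F z‖ ≤ ∑ j, ‖Ef α (w j) z‖ * (c * Sp) := by
      refine (norm_sum_le _ _).trans ?_
      refine Finset.sum_le_sum fun j _ => ?_
      rw [norm_mul]
      refine mul_le_mul_of_nonneg_left ?_ (norm_nonneg _)
      refine (norm_sum_le _ _).trans ?_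
      have : ∀ i, ‖U j i * Ef α (a i) z‖ ≤ c * ‖a i‖ ^ qc := by
        intro i
        rw [norm_mul, ← hA1 z hz1 i]
        exact mul_le_mul_of_nonneg_right (hUc j i) (norm_nonneg _)
      refine (Finset.sum_le_sum fun i _ => this i).trans ?_
      rw [← Finset.mul_sum, hSp]
    refine h1.trans ?_
    rw [← Finset.sum_mul]
    have : ∑ j, ‖Ef α (w j) z‖ = Sq := by
      rw [hSq]; exact Finset.sum_congr rfl fun j _ => hW1 z hz1 j
    rw [this]
    ring_nf
    exact le_refl _
  have hBdd : BddAbove ((norm ∘ F) ''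
      Complex.HadamardThreeLines.verticalClosedStrip 0 1) := by
    refine ⟨(∑ j, max 1 (‖w j‖ ^ (2:ℕ))) * ∑ i, max 1 (‖a i‖ ^ (2:ℕ)), ?_⟩
    rintro y ⟨z, hz, rfl⟩
    obtain ⟨hz0, hz1⟩ := hz
    have hbndW : ∀ j, ‖Ef α (w j) z‖ ≤ max 1 (‖w j‖ ^ (2:ℕ)) :=
      fun j => Ef_norm_le α hαpos hα1 (w j) z hz0 hz1
    have hbndA : ∀ i, ‖Ef α (a i) z‖ ≤ max 1 (‖a i‖ ^ (2:ℕ)) :=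
      fun i => Ef_norm_le α hαpos hα1 (a i) z hz0 hz1
    calc ‖F z‖ ≤ ∑ j, ‖Ef α (w j) z‖ * ‖∑ i, U j i * Ef α (a i) z‖ := by
          refine (norm_sum_le _ _).trans ?_
          exact Finset.sum_le_sum fun j _ => le_of_eq (norm_mul _ _)
      _ ≤ ∑ j, max 1 (‖w j‖ ^ (2:ℕ)) * ∑ i, max 1 (‖a i‖ ^ (2:ℕ)) := by
          refine Finset.sum_le_sum fun j _ => ?_
          refine mul_le_mul (hbndW j) ?_ (norm_nonneg _)
            (le_max_of_le_left zero_le_one)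
          refine (norm_sum_le _ _).trans ?_
          refine Finset.sum_le_sum fun i _ => ?_
          rw [norm_mul]
          refine (mul_le_mul ((hUc j i).trans hc_le_one) (hbndA i)
            (norm_nonneg _) zero_le_one).trans ?_
          rw [one_mul]
      _ = (∑ j, max 1 (‖w j‖ ^ (2:ℕ))) * ∑ i, max 1 (‖a i‖ ^ (2:ℕ)) := by
          rw [← Finset.sum_mul]
  have hzmem : (t : ℂ) ∈ Complex.HadamardThreeLines.verticalClosedStrip 0 1 := by
    simp only [Complex.HadamardThreeLines.verticalClosedStrip, Set.mem_preimage,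
      Complex.ofReal_re, Set.mem_Icc]
    exact ⟨ht0, ht1.le⟩
  have h3l := Complex.HadamardThreeLines.norm_le_interp_of_mem_verticalClosedStrip₀₁' F
    hzmem (hFdiff.diffContOnCl) hBdd hedge0 hedge1
  have hFt : F (t : ℂ) = ((Sq : ℝ) : ℂ) := by
    rw [hF]
    simp only
    have : ∀ j, Ef α (w j) (t:ℂ) * ∑ i, U j i * Ef α (a i) (t:ℂ)
        = ((‖b j‖ ^ q : ℝ) : ℂ) := by
      intro j
      have hsum : ∑ i, U j i * Ef α (a i) (t:ℂ) = b j := by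
        rw [hb]
        simp only
        exact Finset.sum_congr rfl fun i _ => by rw [Ef_eval α (a i) t h1α]
      rw [Ef_eval α (w j) t h1α, hsum, hwb j]
    rw [Finset.sum_congr rfl fun j _ => this j]
    rw [← Complex.ofReal_sum]
  have hFtnorm : ‖F (t : ℂ)‖ = Sq := by
    rw [hFt, Complex.norm_real, Real.norm_eq_abs, abs_of_nonneg hSq_nonneg]
  rw [hFtnorm, Complex.ofReal_re] at h3l
  -- now h3l : Sq ≤ (√Sq * √Sp) ^ (1 - t) * (c * Sq * Sp) ^ t
  have hSppos : 0 < Sp := by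
    have ha0 : ∃ i, a i ≠ 0 := by
      by_contra hno
      push_neg at hno
      have hb0 : ∀ j, b j = 0 := by
        intro j
        rw [hb]
        simp only
        exact Finset.sum_eq_zero fun i _ => by rw [hno i, mul_zero]
      have : Sq = 0 := by
        rw [hSq]
        exact Finset.sum_eq_zero fun j _ => by
          rw [hb0 j, norm_zero, Real.zero_rpow (by positivity)]
      linarith
    obtain ⟨i0, hi0⟩ := ha0
    refine Finset.sum_pos' (fun i _ => Real.rpow_nonneg (norm_nonneg _) _) ?_
    exact ⟨i0, Finset.mem_univ i0, Real.rpow_pos_of_pos (norm_pos_iff.mpr hi0) _⟩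
  have e1 : (Real.sqrt Sq * Real.sqrt Sp) ^ (1 - t) * (c * Sq * Sp) ^ t
      = c ^ t * Sq ^ ((1 + t) / 2) * Sp ^ ((1 + t) / 2) := by
    rw [Real.sqrt_eq_rpow, Real.sqrt_eq_rpow,
      Real.mul_rpow (Real.rpow_nonneg hSq_nonneg _) (Real.rpow_nonneg hSp_nonneg _),
      Real.mul_rpow (mul_nonneg hc_nonneg hSq_nonneg) hSp_nonneg,
      Real.mul_rpow hc_nonneg hSq_nonneg,
      ← Real.rpow_mul hSq_nonneg, ← Real.rpow_mul hSp_nonneg]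
    have hSqsplit : Sq ^ ((1 + t) / 2) = Sq ^ (1 / 2 * (1 - t)) * Sq ^ t := by
      rw [← Real.rpow_add hSqpos]; congr 1; ring
    have hSpsplit : Sp ^ ((1 + t) / 2) = Sp ^ (1 / 2 * (1 - t)) * Sp ^ t := by
      rw [← Real.rpow_add hSppos]; congr 1; ring
    rw [hSqsplit, hSpsplit]
    ring
  rw [e1] at h3l
  have hct : c ^ t = (d : ℝ) ^ (-(t / 2)) := by
    rw [hc_def, ← Real.rpow_mul (Nat.cast_nonneg d)]
    congr 1
    ring
  have hcancel : Sq ^ ((1 - t) / 2) * Sq ^ ((1 + t) / 2)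
      ≤ ((d : ℝ) ^ (-(t / 2)) * Sp ^ ((1 + t) / 2)) * Sq ^ ((1 + t) / 2) := by
    calc Sq ^ ((1 - t) / 2) * Sq ^ ((1 + t) / 2) = Sq := by
          rw [← Real.rpow_add hSqpos, show (1 - t) / 2 + (1 + t) / 2 = 1 by ring,
            Real.rpow_one]
      _ ≤ c ^ t * Sq ^ ((1 + t) / 2) * Sp ^ ((1 + t) / 2) := h3l
      _ = ((d : ℝ) ^ (-(t / 2)) * Sp ^ ((1 + t) / 2)) * Sq ^ ((1 + t) / 2) := by
          rw [hct]; ring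
  exact le_of_mul_le_mul_right hcancel (Real.rpow_pos_of_pos hSqpos _)

lemma MU_pure (d : ℕ) (hd : 0 < d) (U : Fin d → Fin d → ℂ)
    (hUc : ∀ j i, ‖U j i‖ ≤ (d : ℝ) ^ (-(1/2 : ℝ)))
    (hUiso : ∀ v : Fin d → ℂ, ∑ j, ‖∑ i, U j i * v i‖ ^ 2 = ∑ i, ‖v i‖ ^ 2)
    (a : Fin d → ℂ) (ha : ∑ i, ‖a i‖ ^ 2 = 1) :
    Real.log d ≤ Hn (fun i => ‖a i‖ ^ 2) + Hn (fun j => ‖∑ i, U j i * a i‖ ^ 2) := by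
  classical
  set b : Fin d → ℂ := fun j => ∑ i, U j i * a i with hb
  set p : Fin d → ℝ := fun i => ‖a i‖ ^ 2 with hp
  set q : Fin d → ℝ := fun j => ‖b j‖ ^ 2 with hqd
  have hp_nonneg : ∀ i, 0 ≤ p i := fun i => by positivity
  have hq_nonneg : ∀ j, 0 ≤ q j := fun j => by positivity
  have hpsum : ∑ i, p i = 1 := ha
  have hqsum : ∑ j, q j = 1 := by rw [hqd]; rw [show (fun j => ‖b j‖ ^ 2) = fun j => ‖∑ i, U j i * a i‖ ^ 2 from rfl]; rw [hUiso a]; exact ha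
  set S : Finset (Fin d) := Finset.univ.filter (fun i => p i ≠ 0) with hS
  set T : Finset (Fin d) := Finset.univ.filter (fun j => q j ≠ 0) with hT
  have hsubS : ∀ f : Fin d → ℝ, (∀ i, p i = 0 → f i = 0) → ∑ i ∈ S, f i = ∑ i, f i := by
    intro f hf
    refine Finset.sum_subset (Finset.subset_univ S) ?_
    intro x _ hx
    refine hf x ?_
    by_contra hc
    exact hx (Finset.mem_filter.mpr ⟨Finset.mem_univ x, hc⟩)
  have hsubT : ∀ f : Fin d → ℝ, (∀ j, q j = 0 → f j = 0) → ∑ j ∈ T, f j = ∑ j, f j := by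
    intro f hf
    refine Finset.sum_subset (Finset.subset_univ T) ?_
    intro x _ hx
    refine hf x ?_
    by_contra hc
    exact hx (Finset.mem_filter.mpr ⟨Finset.mem_univ x, hc⟩)
  have hSpos : ∀ i ∈ S, 0 < p i := fun i hi =>
    (hp_nonneg i).lt_of_ne (Ne.symm (Finset.mem_filter.mp hi).2)
  have hTpos : ∀ j ∈ T, 0 < q j := fun j hj =>
    (hq_nonneg j).lt_of_ne (Ne.symm (Finset.mem_filter.mp hj).2)
  have hSne : S.Nonempty := by
    by_contra hne
    rw [Finset.not_nonempty_iff_eq_empty] at hne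
    have := hsubS p (fun i h => h)
    rw [hne] at this
    simp [hpsum] at this
  have hTne : T.Nonempty := by
    by_contra hne
    rw [Finset.not_nonempty_iff_eq_empty] at hne
    have := hsubT q (fun j h => h)
    rw [hne] at this
    simp [hqsum] at this
  set φ : ℝ → ℝ := fun x => ∑ i ∈ S, Real.exp (Real.log (p i) * (1 + x)⁻¹) with hφ
  set ψ : ℝ → ℝ := fun x => ∑ j ∈ T, Real.exp (Real.log (q j) * (1 - x)⁻¹) with hψ
  have hφpos : ∀ x, 0 < φ x := fun x => Finset.sum_pos (fun i _ => Real.exp_pos _) hSne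
  have hψpos : ∀ x, 0 < ψ x := fun x => Finset.sum_pos (fun j _ => Real.exp_pos _) hTne
  have hφ0 : φ 0 = 1 := by
    rw [hφ]
    simp only
    rw [show ∑ i ∈ S, Real.exp (Real.log (p i) * (1 + (0:ℝ))⁻¹) = ∑ i ∈ S, p i from
      Finset.sum_congr rfl fun i hi => by
        rw [show ((1:ℝ) + 0)⁻¹ = 1 by norm_num, mul_one, Real.exp_log (hSpos i hi)]]
    rw [hsubS p (fun i h => h), hpsum]
  have hψ0 : ψ 0 = 1 := by
    rw [hψ]
    simp only
    rw [show ∑ j ∈ T, Real.exp (Real.log (q j) * (1 - (0:ℝ))⁻¹) = ∑ j ∈ T, q j from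
      Finset.sum_congr rfl fun j hj => by
        rw [show ((1:ℝ) - 0)⁻¹ = 1 by norm_num, mul_one, Real.exp_log (hTpos j hj)]]
    rw [hsubT q (fun j h => h), hqsum]
  have hφx : ∀ x : ℝ, 0 ≤ x → x < 1 → φ x = ∑ i, ‖a i‖ ^ (2 / (1 + x)) := by
    intro x hx0 hx1
    have h1x : (0:ℝ) < 1 + x := by linarith
    rw [hφ]
    simp only
    rw [← hsubS (fun i => ‖a i‖ ^ (2 / (1 + x))) (fun i h => by
      have hn : ‖a i‖ = 0 := by
        have h' := h
        rw [hp] at h'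
        simpa using pow_eq_zero_iff (n := 2) (by norm_num) |>.mp h'
      show ‖a i‖ ^ (2 / (1 + x)) = 0
      rw [hn, Real.zero_rpow (by positivity)])]
    refine Finset.sum_congr rfl fun i hi => ?_
    have hai : 0 < ‖a i‖ := by
      rcases (norm_nonneg (a i)).lt_or_eq with h | h
      · exact h
      · exfalso; exact (Finset.mem_filter.mp hi).2 (by rw [hp]; simp [← h])
    rw [Real.rpow_def_of_pos hai]
    congr 1
    rw [hp]
    simp only
    rw [Real.log_pow]
    push_cast
    field_simp
  have hψx : ∀ x : ℝ, 0 ≤ x → x < 1 → ψ x = ∑ j, ‖b j‖ ^ (2 / (1 - x)) := by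
    intro x hx0 hx1
    have h1x : (0:ℝ) < 1 - x := by linarith
    rw [hψ]
    simp only
    rw [← hsubT (fun j => ‖b j‖ ^ (2 / (1 - x))) (fun j h => by
      have hn : ‖b j‖ = 0 := by
        have h' := h
        rw [hqd] at h'
        simpa using pow_eq_zero_iff (n := 2) (by norm_num) |>.mp h'
      show ‖b j‖ ^ (2 / (1 - x)) = 0
      rw [hn, Real.zero_rpow (by positivity)])]
    refine Finset.sum_congr rfl fun j hj => ?_
    have hbj : 0 < ‖b j‖ := by
      rcases (norm_nonneg (b j)).lt_or_eq with h | h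
      · exact h
      · exfalso; exact (Finset.mem_filter.mp hj).2 (by rw [hqd]; simp [← h])
    rw [Real.rpow_def_of_pos hbj]
    congr 1
    rw [hqd]
    simp only
    rw [Real.log_pow]
    push_cast
    field_simp
  set G : ℝ → ℝ := fun x =>
    (1 - x) / 2 * Real.log (ψ x) + x / 2 * Real.log d - (1 + x) / 2 * Real.log (φ x)
    with hG
  have hG0 : G 0 = 0 := by
    rw [hG]
    simp [hφ0, hψ0]
  have hGle : ∀ x ∈ Set.Ico (0:ℝ) 1, G x ≤ 0 := by
    rintro x ⟨hx0, hx1⟩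
    have h1x : (0:ℝ) < 1 - x := by linarith
    have h1x' : (0:ℝ) < 1 + x := by linarith
    have hstep := stepA d hd U hUc hUiso a x hx0 hx1
    rw [← hψx x hx0 hx1, ← hφx x hx0 hx1] at hstep
    have hLpos : 0 < ψ x ^ ((1 - x) / 2) := Real.rpow_pos_of_pos (hψpos x) _
    have hdpos : (0:ℝ) < (d:ℝ) := by exact_mod_cast hd
    have hlog := Real.log_le_log hLpos hstep
    rw [Real.log_rpow (hψpos x), Real.log_mul (ne_of_gt (Real.rpow_pos_of_pos hdpos _))
      (ne_of_gt (Real.rpow_pos_of_pos (hφpos x) _)), Real.log_rpow hdpos,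
      Real.log_rpow (hφpos x)] at hlog
    rw [hG]
    simp only
    nlinarith [hlog]
  -- derivative of G at 0
  have hinv1 : HasDerivAt (fun x : ℝ => (1 + x)⁻¹) (-1) 0 := by
    have h := (((hasDerivAt_id (0:ℝ)).const_add 1).inv (by norm_num))
    refine h.congr_deriv ?_
    simp
  have hinv2 : HasDerivAt (fun x : ℝ => (1 - x)⁻¹) 1 0 := by
    have h := (((hasDerivAt_id (0:ℝ)).const_sub 1).inv (by norm_num))
    refine h.congr_deriv ?_
    simp
  have hφd : HasDerivAt φ (-(∑ i ∈ S, p i * Real.log (p i))) 0 := by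
    rw [hφ, ← Finset.sum_neg_distrib]
    apply HasDerivAt.fun_sum
    intro i hi
    have h1 : HasDerivAt (fun x : ℝ => Real.log (p i) * (1 + x)⁻¹)
        (Real.log (p i) * (-1)) 0 := hinv1.const_mul _
    have h2 := h1.exp
    refine h2.congr_deriv ?_
    rw [show ((1:ℝ) + 0)⁻¹ = 1 by norm_num, mul_one, Real.exp_log (hSpos i hi)]
    ring
  have hψd : HasDerivAt ψ (∑ j ∈ T, q j * Real.log (q j)) 0 := by
    rw [hψ]
    apply HasDerivAt.fun_sum
    intro j hj
    have h1 : HasDerivAt (fun x : ℝ => Real.log (q j) * (1 - x)⁻¹)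
        (Real.log (q j) * 1) 0 := hinv2.const_mul _
    have h2 := h1.exp
    refine h2.congr_deriv ?_
    rw [show ((1:ℝ) - 0)⁻¹ = 1 by norm_num, mul_one, Real.exp_log (hTpos j hj)]
  have hlogψd : HasDerivAt (fun x => Real.log (ψ x))
      (∑ j ∈ T, q j * Real.log (q j)) 0 := by
    have := hψd.log (by rw [hψ0]; norm_num)
    rw [hψ0] at this
    simpa using this
  have hlogφd : HasDerivAt (fun x => Real.log (φ x))
      (-(∑ i ∈ S, p i * Real.log (p i))) 0 := by
    have := hφd.log (by rw [hφ0]; norm_num)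
    rw [hφ0] at this
    simpa using this
  have hf1 : HasDerivAt (fun x : ℝ => (1 - x) / 2) (-(1/2)) 0 := by
    have h := ((hasDerivAt_id (0:ℝ)).const_sub 1).div_const 2
    refine h.congr_deriv ?_
    norm_num
  have hf2 : HasDerivAt (fun x : ℝ => (1 + x) / 2) (1/2) 0 := by
    have h := ((hasDerivAt_id (0:ℝ)).const_add 1).div_const 2
    exact h
  have hf3 : HasDerivAt (fun x : ℝ => x / 2 * Real.log d) (Real.log d / 2) 0 := by
    have h := ((hasDerivAt_id (0:ℝ)).div_const 2).mul_const (Real.log d)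
    refine h.congr_deriv ?_
    ring
  set D : ℝ := (1/2) * (∑ j ∈ T, q j * Real.log (q j)) + Real.log d / 2
      + (1/2) * (∑ i ∈ S, p i * Real.log (p i)) with hD
  have hGd : HasDerivAt G D 0 := by
    have h1 := hf1.mul hlogψd
    have h2 := hf2.mul hlogφd
    have h := (h1.add hf3).sub h2
    refine h.congr_deriv ?_
    rw [hD, hψ0, hφ0]
    simp [Real.log_one]
  -- conclude D ≤ 0
  have hDle : D ≤ 0 := by
    have hmem : (0:ℝ) ∈ Set.Ico (0:ℝ) 1 := ⟨le_refl 0, by norm_num⟩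
    have hwithin := (hGd.hasDerivWithinAt (s := Set.Ico (0:ℝ) 1))
    have hslope := hasDerivWithinAt_iff_tendsto_slope.mp hwithin
    have hdiff : Set.Ico (0:ℝ) 1 \ {0} = Set.Ioo (0:ℝ) 1 := Set.Ico_diff_left
    rw [hdiff] at hslope
    haveI hne : (nhdsWithin (0:ℝ) (Set.Ioo (0:ℝ) 1)).NeBot := by
      refine mem_closure_iff_nhdsWithin_neBot.mp ?_
      rw [closure_Ioo (by norm_num : (0:ℝ) ≠ 1)]
      exact ⟨le_refl 0, by norm_num⟩
    refine le_of_tendsto hslope ?_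
    refine Filter.eventually_iff_exists_mem.mpr ⟨Set.Ioo (0:ℝ) 1, self_mem_nhdsWithin, ?_⟩
    rintro x ⟨hx0, hx1⟩
    rw [slope_def_field, hG0]
    simp only [sub_zero]
    exact div_nonpos_of_nonpos_of_nonneg (hGle x ⟨hx0.le, hx1⟩) hx0.le
  have hHnp : Hn p = -(∑ i ∈ S, p i * Real.log (p i)) := by
    rw [Hn, ← hsubS (fun i => Real.negMulLog (p i)) (fun i h => by simp [Real.negMulLog, h]),
      ← Finset.sum_neg_distrib]
    exact Finset.sum_congr rfl fun i _ => by rw [Real.negMulLog]; ring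
  have hHnq : Hn q = -(∑ j ∈ T, q j * Real.log (q j)) := by
    rw [Hn, ← hsubT (fun j => Real.negMulLog (q j)) (fun j h => by simp [Real.negMulLog, h]),
      ← Finset.sum_neg_distrib]
    exact Finset.sum_congr rfl fun j _ => by rw [Real.negMulLog]; ring
  have : Real.log d ≤ Hn p + Hn q := by
    rw [hHnp, hHnq]
    rw [hD] at hDle
    linarith
  exact this

/-- Completeness: sum over a complete family of |⟨w i, u⟩|² equals ‖u‖². -/
lemma sum_inner_sq (d : ℕ) (w : Fin d → Fin d → ℂ)
    (hC : ∑ i, Matrix.vecMulVec (w i) (star (w i)) = (1 : Matrix (Fin d) (Fin d) ℂ))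
    (u : Fin d → ℂ) :
    ∑ i, (starRingEnd ℂ) (∑ x, (starRingEnd ℂ) (w i x) * u x)
        * (∑ x, (starRingEnd ℂ) (w i x) * u x)
      = ∑ x, (starRingEnd ℂ) (u x) * u x := by
  have h1 : ∀ y x, ∑ i, w i y * (starRingEnd ℂ) (w i x)
      = if y = x then 1 else 0 := by
    intro y x
    have := congrFun (congrFun hC y) x
    simpa [Matrix.sum_apply, Matrix.vecMulVec_apply, Matrix.one_apply] using this
  calc ∑ i, (starRingEnd ℂ) (∑ x, (starRingEnd ℂ) (w i x) * u x)
        * (∑ x, (starRingEnd ℂ) (w i x) * u x)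
      = ∑ i, ∑ y, ∑ x, (w i y * (starRingEnd ℂ) (u y))
          * ((starRingEnd ℂ) (w i x) * u x) := by
        refine Finset.sum_congr rfl fun i _ => ?_
        rw [map_sum, Finset.sum_mul_sum]
        refine Finset.sum_congr rfl fun y _ => Finset.sum_congr rfl fun x _ => ?_
        simp only [_root_.map_mul, Complex.conj_conj]
    _ = ∑ y, ∑ x, ((starRingEnd ℂ) (u y) * u x) * ∑ i, w i y * (starRingEnd ℂ) (w i x) := by
        rw [Finset.sum_comm]
        refine Finset.sum_congr rfl fun y _ => ?_
        rw [Finset.sum_comm]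
        refine Finset.sum_congr rfl fun x _ => ?_
        rw [Finset.mul_sum]
        refine Finset.sum_congr rfl fun i _ => ?_
        ring
    _ = ∑ x, (starRingEnd ℂ) (u x) * u x := by
        simp only [h1, mul_ite, mul_one, mul_zero]
        rw [Finset.sum_comm]
        refine Finset.sum_congr rfl fun x _ => ?_
        simp
/-- Orthonormality: norm² of a linear combination. -/
lemma sum_combo_sq (d : ℕ) (w : Fin d → Fin d → ℂ)
    (hO : ∀ i j, ∑ x, star (w i x) * w j x = if i = j then 1 else 0)
    (v : Fin d → ℂ) :
    ∑ x, (starRingEnd ℂ) (∑ i, v i * w i x) * (∑ i, v i * w i x)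
      = ∑ i, (starRingEnd ℂ) (v i) * v i := by
  calc ∑ x, (starRingEnd ℂ) (∑ i, v i * w i x) * (∑ i, v i * w i x)
      = ∑ x, ∑ i, ∑ j, ((starRingEnd ℂ) (v i) * v j)
          * ((starRingEnd ℂ) (w i x) * w j x) := by
        refine Finset.sum_congr rfl fun x _ => ?_
        rw [map_sum, Finset.sum_mul_sum]
        refine Finset.sum_congr rfl fun i _ => Finset.sum_congr rfl fun j _ => ?_
        simp only [_root_.map_mul]
        ring
    _ = ∑ i, ∑ j, ((starRingEnd ℂ) (v i) * v j) * ∑ x, (starRingEnd ℂ) (w i x) * w j x := by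
        rw [Finset.sum_comm]
        refine Finset.sum_congr rfl fun i _ => ?_
        rw [Finset.sum_comm]
        refine Finset.sum_congr rfl fun j _ => ?_
        rw [Finset.mul_sum]
    _ = ∑ i, (starRingEnd ℂ) (v i) * v i := by
        have : ∀ i j, ∑ x, (starRingEnd ℂ) (w i x) * w j x = if i = j then 1 else 0 :=
          fun i j => hO i j
        simp only [this, mul_ite, mul_one, mul_zero]
        refine Finset.sum_congr rfl fun i _ => ?_
        simp

lemma MU_mixed (d : ℕ) (hd : 0 < d) (B₁ B₂ : Fin d → Fin d → ℂ)
    (hB₁o : ∀ i j, ∑ x, star (B₁ i x) * B₁ j x = if i = j then 1 else 0)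
    (hB₁c : ∑ i, Matrix.vecMulVec (B₁ i) (star (B₁ i)) = 1)
    (hB₂o : ∀ i j, ∑ x, star (B₂ i x) * B₂ j x = if i = j then 1 else 0)
    (hB₂c : ∑ i, Matrix.vecMulVec (B₂ i) (star (B₂ i)) = 1)
    (hMUB : ∀ i j, ‖∑ x, star (B₁ i x) * B₂ j x‖ ^ 2 = 1 / d)
    (σ : Matrix (Fin d) (Fin d) ℂ) (hσ : σ.PosSemidef) (htr : σ.trace = 1) :
    Real.log d ≤ Hn (fun i => (star (B₁ i) ⬝ᵥ σ *ᵥ B₁ i).re)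
      + Hn (fun j => (star (B₂ j) ⬝ᵥ σ *ᵥ B₂ j).re) := by
  classical
  have hherm : σ.IsHermitian := hσ.1
  set V : Matrix (Fin d) (Fin d) ℂ := (hherm.eigenvectorUnitary : Matrix (Fin d) (Fin d) ℂ)
    with hV
  set lam : Fin d → ℝ := hherm.eigenvalues with hlam
  have hlam_nonneg : ∀ k, 0 ≤ lam k := fun k => hσ.eigenvalues_nonneg k
  have hVU : star V * V = 1 := by
    rw [hV]
    exact Unitary.coe_star_mul_self hherm.eigenvectorUnitary
  have hspec : σ = V * Matrix.diagonal (RCLike.ofReal ∘ lam) * star V :=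
    hherm.spectral_theorem
  have hlamsum : ∑ k, lam k = 1 := by
    have h1 : σ.trace = ∑ k, ((lam k : ℝ) : ℂ) := by
      rw [hspec, Matrix.trace_mul_cycle, hVU, Matrix.one_mul, Matrix.trace_diagonal]
      simp
    rw [htr] at h1
    have h2 : ((∑ k, lam k : ℝ) : ℂ) = 1 := by push_cast; rw [← h1]
    exact_mod_cast h2
  -- eigenvector-column facts
  have hVcol : ∀ k, ∑ x, (starRingEnd ℂ) (V x k) * V x k = 1 := by
    intro k
    have := congrFun (congrFun hVU k) k
    simpa [Matrix.mul_apply, Matrix.star_apply, Matrix.one_apply] using this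
  -- coefficients
  set c : (Fin d → ℂ) → Fin d → ℂ :=
    fun v k => ∑ x, (starRingEnd ℂ) (v x) * V x k with hc
  have hσxy : ∀ x y, σ x y
      = ∑ m, V x m * ((lam m : ℝ) : ℂ) * (starRingEnd ℂ) (V y m) := by
    intro x y
    rw [hspec]
    rw [Matrix.mul_apply]
    refine Finset.sum_congr rfl fun m _ => ?_
    rw [Matrix.mul_apply, Matrix.star_apply]
    have : ∑ n, V x n * Matrix.diagonal (RCLike.ofReal ∘ lam) n m
        = V x m * ((lam m : ℝ) : ℂ) := by
      rw [Finset.sum_eq_single m]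
      · simp [Matrix.diagonal_apply]
      · intro n _ hn
        simp [Matrix.diagonal_apply, hn]
      · intro h
        exact absurd (Finset.mem_univ m) h
    rw [this]
    rfl
  have hval : ∀ v : Fin d → ℂ, star v ⬝ᵥ σ *ᵥ v
      = ∑ k, ((lam k : ℝ) : ℂ) * (c v k * (starRingEnd ℂ) (c v k)) := by
    intro v
    calc star v ⬝ᵥ σ *ᵥ v
        = ∑ x, ∑ y, ∑ m, (starRingEnd ℂ) (v x)
            * ((V x m * ((lam m : ℝ) : ℂ) * (starRingEnd ℂ) (V y m)) * v y) := by
          rw [dotProduct]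
          refine Finset.sum_congr rfl fun x _ => ?_
          rw [Matrix.mulVec, dotProduct]
          simp only [Pi.star_apply, Complex.star_def]
          rw [Finset.mul_sum]
          refine Finset.sum_congr rfl fun y _ => ?_
          rw [hσxy x y, Finset.sum_mul, Finset.mul_sum]
      _ = ∑ m, ∑ x, ∑ y, (starRingEnd ℂ) (v x)
            * ((V x m * ((lam m : ℝ) : ℂ) * (starRingEnd ℂ) (V y m)) * v y) := by
          rw [show (∑ x, ∑ y, ∑ m, (starRingEnd ℂ) (v x)
              * ((V x m * ((lam m : ℝ) : ℂ) * (starRingEnd ℂ) (V y m)) * v y))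
            = ∑ x, ∑ m, ∑ y, (starRingEnd ℂ) (v x)
              * ((V x m * ((lam m : ℝ) : ℂ) * (starRingEnd ℂ) (V y m)) * v y) from
            Finset.sum_congr rfl fun x _ => Finset.sum_comm]
          exact Finset.sum_comm
      _ = ∑ m, ((lam m : ℝ) : ℂ)
            * ((∑ x, (starRingEnd ℂ) (v x) * V x m) * (∑ y, (starRingEnd ℂ) (V y m) * v y)) := by
          refine Finset.sum_congr rfl fun m _ => ?_
          rw [Finset.sum_mul_sum, Finset.mul_sum]
          refine Finset.sum_congr rfl fun x _ => ?_
          rw [Finset.mul_sum]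
          refine Finset.sum_congr rfl fun y _ => ?_
          ring
      _ = ∑ k, ((lam k : ℝ) : ℂ) * (c v k * (starRingEnd ℂ) (c v k)) := by
          refine Finset.sum_congr rfl fun k _ => ?_
          congr 1
          congr 1
          rw [hc, map_sum]
          refine Finset.sum_congr rfl fun y _ => ?_
          simp only [_root_.map_mul, Complex.conj_conj]
          ring
  have hnorm2 : ∀ z : ℂ, ((starRingEnd ℂ) z * z).re = ‖z‖ ^ 2 := by
    intro z
    rw [mul_comm, Complex.mul_conj, Complex.ofReal_re, ← Complex.sq_norm]
  -- real probability decomposition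
  have hre : ∀ v : Fin d → ℂ, (star v ⬝ᵥ σ *ᵥ v).re = ∑ k, lam k * ‖c v k‖ ^ 2 := by
    intro v
    rw [hval v, Complex.re_sum]
    refine Finset.sum_congr rfl fun k _ => ?_
    rw [Complex.mul_conj, ← Complex.ofReal_mul, Complex.ofReal_re, ← Complex.sq_norm]
  set U : Fin d → Fin d → ℂ := fun j i => ∑ x, (starRingEnd ℂ) (B₂ j x) * B₁ i x with hU
  have hUc : ∀ j i, ‖U j i‖ ≤ (d : ℝ) ^ (-(1/2 : ℝ)) := by
    intro j i
    have hUconj : U j i = (starRingEnd ℂ) (∑ x, star (B₁ i x) * B₂ j x) := by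
      rw [hU, map_sum]
      refine Finset.sum_congr rfl fun x _ => ?_
      simp only [Complex.star_def, _root_.map_mul, Complex.conj_conj]
      ring
    have h1 : ‖U j i‖ = ‖∑ x, star (B₁ i x) * B₂ j x‖ := by
      rw [hUconj, RCLike.norm_conj]
    have h2 : ‖U j i‖ ^ 2 = 1 / (d:ℝ) := by rw [h1]; exact hMUB i j
    have h3 : ‖U j i‖ = Real.sqrt (1 / d) := by
      rw [← Real.sqrt_sq (norm_nonneg (U j i)), h2]
    rw [h3, Real.sqrt_eq_rpow, one_div, Real.inv_rpow (Nat.cast_nonneg d),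
      ← Real.rpow_neg (Nat.cast_nonneg d)]
  have hB1centry : ∀ x y, ∑ i, B₁ i x * (starRingEnd ℂ) (B₁ i y)
      = if x = y then 1 else 0 := by
    intro x y
    have := congrFun (congrFun hB₁c x) y
    simpa [Matrix.sum_apply, Matrix.vecMulVec_apply, Matrix.one_apply] using this
  have hUiso : ∀ v : Fin d → ℂ, ∑ j, ‖∑ i, U j i * v i‖ ^ 2 = ∑ i, ‖v i‖ ^ 2 := by
    intro v
    set tv : Fin d → ℂ := fun x => ∑ i, v i * B₁ i x with htv
    have h1 : ∀ j, ∑ i, U j i * v i = ∑ x, (starRingEnd ℂ) (B₂ j x) * tv x := by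
      intro j
      calc ∑ i, U j i * v i
          = ∑ i, ∑ x, (starRingEnd ℂ) (B₂ j x) * (v i * B₁ i x) := by
            refine Finset.sum_congr rfl fun i _ => ?_
            rw [hU]
            rw [Finset.sum_mul]
            refine Finset.sum_congr rfl fun x _ => ?_
            ring
        _ = ∑ x, ∑ i, (starRingEnd ℂ) (B₂ j x) * (v i * B₁ i x) := Finset.sum_comm
        _ = ∑ x, (starRingEnd ℂ) (B₂ j x) * tv x := by
            refine Finset.sum_congr rfl fun x _ => ?_
            rw [htv, Finset.mul_sum]
    have h2 : ∑ j, (starRingEnd ℂ) (∑ i, U j i * v i) * (∑ i, U j i * v i)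
        = ∑ i, (starRingEnd ℂ) (v i) * v i := by
      calc ∑ j, (starRingEnd ℂ) (∑ i, U j i * v i) * (∑ i, U j i * v i)
          = ∑ j, (starRingEnd ℂ) (∑ x, (starRingEnd ℂ) (B₂ j x) * tv x)
              * (∑ x, (starRingEnd ℂ) (B₂ j x) * tv x) := by
            refine Finset.sum_congr rfl fun j _ => ?_
            rw [h1 j]
        _ = ∑ x, (starRingEnd ℂ) (tv x) * tv x := sum_inner_sq d B₂ hB₂c tv
        _ = ∑ i, (starRingEnd ℂ) (v i) * v i := sum_combo_sq d B₁ hB₁o v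
    calc ∑ j, ‖∑ i, U j i * v i‖ ^ 2
        = ∑ j, ((starRingEnd ℂ) (∑ i, U j i * v i) * (∑ i, U j i * v i)).re := by
          refine Finset.sum_congr rfl fun j _ => (hnorm2 _).symm
      _ = (∑ j, (starRingEnd ℂ) (∑ i, U j i * v i) * (∑ i, U j i * v i)).re := by
          rw [Complex.re_sum]
      _ = (∑ i, (starRingEnd ℂ) (v i) * v i).re := by rw [h2]
      _ = ∑ i, ‖v i‖ ^ 2 := by
          rw [Complex.re_sum]
          exact Finset.sum_congr rfl fun i _ => hnorm2 _
  -- per-eigenvector vectors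
  have hnormsum : ∀ k, ∑ i, ‖c (B₁ i) k‖ ^ 2 = 1 := by
    intro k
    have h1 := sum_inner_sq d B₁ hB₁c (fun x => V x k)
    have h2 : ∑ i, (starRingEnd ℂ) (c (B₁ i) k) * (c (B₁ i) k)
        = ∑ x, (starRingEnd ℂ) (V x k) * V x k := h1
    calc ∑ i, ‖c (B₁ i) k‖ ^ 2
        = (∑ i, (starRingEnd ℂ) (c (B₁ i) k) * (c (B₁ i) k)).re := by
          rw [Complex.re_sum]
          exact Finset.sum_congr rfl fun i _ => (hnorm2 _).symm
      _ = ((1:ℂ)).re := by rw [h2, hVcol k]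
      _ = 1 := Complex.one_re
  have hrel : ∀ k j, ∑ i, U j i * c (B₁ i) k = c (B₂ j) k := by
    intro k j
    calc ∑ i, U j i * c (B₁ i) k
        = ∑ i, ∑ x, ∑ y, ((starRingEnd ℂ) (B₂ j x) * V y k)
            * (B₁ i x * (starRingEnd ℂ) (B₁ i y)) := by
          refine Finset.sum_congr rfl fun i _ => ?_
          rw [hU, hc]
          rw [Finset.sum_mul_sum]
          refine Finset.sum_congr rfl fun x _ => Finset.sum_congr rfl fun y _ => ?_
          ring
      _ = ∑ x, ∑ y, ((starRingEnd ℂ) (B₂ j x) * V y k)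
            * ∑ i, B₁ i x * (starRingEnd ℂ) (B₁ i y) := by
          rw [show (∑ i, ∑ x, ∑ y, ((starRingEnd ℂ) (B₂ j x) * V y k)
              * (B₁ i x * (starRingEnd ℂ) (B₁ i y)))
            = ∑ x, ∑ i, ∑ y, ((starRingEnd ℂ) (B₂ j x) * V y k)
              * (B₁ i x * (starRingEnd ℂ) (B₁ i y)) from Finset.sum_comm]
          refine Finset.sum_congr rfl fun x _ => ?_
          rw [Finset.sum_comm]
          refine Finset.sum_congr rfl fun y _ => ?_
          rw [Finset.mul_sum]
      _ = ∑ x, (starRingEnd ℂ) (B₂ j x) * V x k := by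
          simp only [hB1centry, mul_ite, mul_one, mul_zero]
          refine Finset.sum_congr rfl fun x _ => ?_
          simp
      _ = c (B₂ j) k := rfl
  -- Jensen
  have hjensen : ∀ (f : Fin d → Fin d → ℝ), (∀ k i, 0 ≤ f k i) →
      ∑ k, lam k * Hn (f k) ≤ Hn (fun i => ∑ k, lam k * f k i) := by
    intro f hf
    have hper : ∀ i, ∑ k, lam k * Real.negMulLog (f k i)
        ≤ Real.negMulLog (∑ k, lam k * f k i) := by
      intro i
      have := (Real.concaveOn_negMulLog).le_map_sum
        (t := Finset.univ) (w := lam) (p := fun k => f k i)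
        (fun k _ => hlam_nonneg k) hlamsum (fun k _ => Set.mem_Ici.mpr (hf k i))
      simpa [smul_eq_mul] using this
    calc ∑ k, lam k * Hn (f k) = ∑ k, ∑ i, lam k * Real.negMulLog (f k i) := by
          refine Finset.sum_congr rfl fun k _ => ?_
          rw [Hn, Finset.mul_sum]
      _ = ∑ i, ∑ k, lam k * Real.negMulLog (f k i) := Finset.sum_comm
      _ ≤ ∑ i, Real.negMulLog (∑ k, lam k * f k i) := Finset.sum_le_sum fun i _ => hper i
      _ = Hn (fun i => ∑ k, lam k * f k i) := by rw [Hn]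
  set pk : Fin d → Fin d → ℝ := fun k i => ‖c (B₁ i) k‖ ^ 2 with hpk
  set qk : Fin d → Fin d → ℝ := fun k j => ‖c (B₂ j) k‖ ^ 2 with hqk
  have hMUk : ∀ k, Real.log d ≤ Hn (pk k) + Hn (qk k) := by
    intro k
    have h := MU_pure d hd U hUc hUiso (fun i => c (B₁ i) k) (hnormsum k)
    have hfix : (fun j => ‖∑ i, U j i * c (B₁ i) k‖ ^ 2) = qk k := by
      funext j
      rw [hrel k j]
    rw [hfix] at h
    exact h
  have hfinal : Real.log d ≤ ∑ k, lam k * (Hn (pk k) + Hn (qk k)) := by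
    calc Real.log d = ∑ k, lam k * Real.log d := by
          rw [← Finset.sum_mul, hlamsum, one_mul]
      _ ≤ ∑ k, lam k * (Hn (pk k) + Hn (qk k)) :=
          Finset.sum_le_sum fun k _ => mul_le_mul_of_nonneg_left (hMUk k) (hlam_nonneg k)
  have hsplit : ∑ k, lam k * (Hn (pk k) + Hn (qk k))
      = ∑ k, lam k * Hn (pk k) + ∑ k, lam k * Hn (qk k) := by
    rw [← Finset.sum_add_distrib]
    refine Finset.sum_congr rfl fun k _ => ?_
    ring
  have hp_eq : (fun i => (star (B₁ i) ⬝ᵥ σ *ᵥ B₁ i).re)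
      = fun i => ∑ k, lam k * pk k i := by
    funext i
    rw [hre (B₁ i)]
  have hq_eq : (fun j => (star (B₂ j) ⬝ᵥ σ *ᵥ B₂ j).re)
      = fun j => ∑ k, lam k * qk k j := by
    funext j
    rw [hre (B₂ j)]
  rw [hp_eq, hq_eq]
  have hj1 := hjensen pk (fun k i => by positivity)
  have hj2 := hjensen qk (fun k j => by positivity)
  calc Real.log d ≤ ∑ k, lam k * (Hn (pk k) + Hn (qk k)) := hfinal
    _ = ∑ k, lam k * Hn (pk k) + ∑ k, lam k * Hn (qk k) := hsplit
    _ ≤ Hn (fun i => ∑ k, lam k * pk k i) + Hn (fun j => ∑ k, lam k * qk k j) :=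
        add_le_add hj1 hj2

open Kronecker in
/-- Master trace formula: Tr((|v⟩⟨v| ⊗ N) ρ) = ⟨v| τ |v⟩ with τ the partial
measurement operator. -/
lemma trace_kron {dA : ℕ} {b : Type*} [Fintype b]
    (ρ : Matrix (Fin dA × b) (Fin dA × b) ℂ) (Ns : Matrix b b ℂ) (v : Fin dA → ℂ) :
    ((Matrix.vecMulVec v (star v) ⊗ₖ Ns) * ρ).trace
      = star v ⬝ᵥ (Matrix.of fun i j => ∑ k, ∑ l, Ns k l * ρ (i, l) (j, k)) *ᵥ v := by
  classical
  calc ((Matrix.vecMulVec v (star v) ⊗ₖ Ns) * ρ).trace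
      = ∑ i, ∑ k, ∑ j, ∑ l, (v i * (starRingEnd ℂ) (v j) * Ns k l) * ρ (j, l) (i, k) := by
        rw [Matrix.trace]
        rw [Fintype.sum_prod_type]
        refine Finset.sum_congr rfl fun i _ => Finset.sum_congr rfl fun k _ => ?_
        rw [Matrix.diag_apply, Matrix.mul_apply, Fintype.sum_prod_type]
        refine Finset.sum_congr rfl fun j _ => Finset.sum_congr rfl fun l _ => ?_
        rw [Matrix.kroneckerMap_apply, Matrix.vecMulVec_apply]
        simp only [Pi.star_apply, Complex.star_def]
    _ = ∑ i, ∑ j, ∑ k, ∑ l, (v i * (starRingEnd ℂ) (v j) * Ns k l) * ρ (j, l) (i, k) := by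
        refine Finset.sum_congr rfl fun i _ => Finset.sum_comm
    _ = ∑ j, ∑ i, ∑ k, ∑ l, (starRingEnd ℂ) (v j) * ((Ns k l * ρ (j, l) (i, k)) * v i) := by
        rw [Finset.sum_comm]
        refine Finset.sum_congr rfl fun i _ => Finset.sum_congr rfl fun j _ =>
          Finset.sum_congr rfl fun k _ => Finset.sum_congr rfl fun l _ => ?_
        ring
    _ = star v ⬝ᵥ (Matrix.of fun i j => ∑ k, ∑ l, Ns k l * ρ (i, l) (j, k)) *ᵥ v := by
        rw [dotProduct]
        refine Finset.sum_congr rfl fun j _ => ?_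
        rw [Matrix.mulVec, dotProduct, Pi.star_apply, Complex.star_def,
          Finset.mul_sum]
        refine Finset.sum_congr rfl fun i _ => ?_
        rw [Matrix.of_apply, Finset.sum_mul, Finset.mul_sum]
        refine Finset.sum_congr rfl fun k _ => ?_
        rw [Finset.sum_mul, Finset.mul_sum]

lemma tau_posSemidef {dA : ℕ} {b : Type*} [Fintype b]
    (ρ : Matrix (Fin dA × b) (Fin dA × b) ℂ) (hρ : ρ.PosSemidef)
    (Ns : Matrix b b ℂ) (hNs : Ns.PosSemidef) :
    (Matrix.of fun i j => ∑ k, ∑ l, Ns k l * ρ (i, l) (j, k)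
      : Matrix (Fin dA) (Fin dA) ℂ).PosSemidef := by
  classical
  obtain ⟨C, hC⟩ : ∃ C : Matrix (Fin dA × b) (Fin dA × b) ℂ, ρ = Cᴴ * C := by
    open scoped MatrixOrder Matrix.Norms.L2Operator in
    obtain ⟨C, hC⟩ := CStarAlgebra.nonneg_iff_eq_star_mul_self.mp hρ.nonneg
    exact ⟨C, hC⟩
  obtain ⟨D, hD⟩ : ∃ D : Matrix b b ℂ, Ns = Dᴴ * D := by
    open scoped MatrixOrder Matrix.Norms.L2Operator in
    obtain ⟨D, hD⟩ := CStarAlgebra.nonneg_iff_eq_star_mul_self.mp hNs.nonneg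
    exact ⟨D, hD⟩
  set Y : Matrix ((Fin dA × b) × b) (Fin dA) ℂ :=
    Matrix.of (fun mn i => ∑ kk, C mn.1 (i, kk) * (starRingEnd ℂ) (D mn.2 kk)) with hY
  have heq : (Matrix.of fun i j => ∑ k, ∑ l, Ns k l * ρ (i, l) (j, k)
      : Matrix (Fin dA) (Fin dA) ℂ) = Yᴴ * Y := by
    ext i j
    rw [Matrix.of_apply, Matrix.mul_apply, Fintype.sum_prod_type]
    calc ∑ k, ∑ l, Ns k l * ρ (i, l) (j, k)
        = ∑ k, ∑ l, ∑ n, ∑ m, ((starRingEnd ℂ) (D n k) * D n l)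
            * ((starRingEnd ℂ) (C m (i, l)) * C m (j, k)) := by
          refine Finset.sum_congr rfl fun k _ => Finset.sum_congr rfl fun l _ => ?_
          rw [hC, hD, Matrix.mul_apply, Matrix.mul_apply, Finset.sum_mul_sum]
          refine Finset.sum_congr rfl fun n _ => Finset.sum_congr rfl fun m _ => ?_
          rw [Matrix.conjTranspose_apply, Matrix.conjTranspose_apply]
          simp only [Complex.star_def]
    _ = ∑ k, ∑ l, ∑ m, ∑ n, ((starRingEnd ℂ) (D n k) * D n l)
            * ((starRingEnd ℂ) (C m (i, l)) * C m (j, k)) := by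
          exact Finset.sum_congr rfl fun k _ => Finset.sum_congr rfl fun l _ =>
            Finset.sum_comm
    _ = ∑ k, ∑ m, ∑ l, ∑ n, ((starRingEnd ℂ) (D n k) * D n l)
            * ((starRingEnd ℂ) (C m (i, l)) * C m (j, k)) := by
          exact Finset.sum_congr rfl fun k _ => Finset.sum_comm
    _ = ∑ m, ∑ k, ∑ l, ∑ n, ((starRingEnd ℂ) (D n k) * D n l)
            * ((starRingEnd ℂ) (C m (i, l)) * C m (j, k)) := Finset.sum_comm
    _ = ∑ m, ∑ k, ∑ n, ∑ l, ((starRingEnd ℂ) (D n k) * D n l)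
            * ((starRingEnd ℂ) (C m (i, l)) * C m (j, k)) := by
          exact Finset.sum_congr rfl fun m _ => Finset.sum_congr rfl fun k _ =>
            Finset.sum_comm
    _ = ∑ m, ∑ n, ∑ k, ∑ l, ((starRingEnd ℂ) (D n k) * D n l)
            * ((starRingEnd ℂ) (C m (i, l)) * C m (j, k)) := by
          exact Finset.sum_congr rfl fun m _ => Finset.sum_comm
    _ = ∑ m, ∑ n, (starRingEnd ℂ) (Y (m, n) i) * Y (m, n) j := by
          refine Finset.sum_congr rfl fun m _ => Finset.sum_congr rfl fun n _ => ?_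
          rw [hY]
          simp only [Matrix.of_apply]
          rw [map_sum, Finset.sum_mul_sum]
          rw [Finset.sum_comm]
          refine Finset.sum_congr rfl fun k _ => Finset.sum_congr rfl fun l _ => ?_
          simp only [_root_.map_mul, Complex.conj_conj]
          ring
    _ = ∑ m, ∑ n, Yᴴ i (m, n) * Y (m, n) j := by
          refine Finset.sum_congr rfl fun m _ => Finset.sum_congr rfl fun n _ => ?_
          rw [Matrix.conjTranspose_apply]
          rfl
  rw [heq]
  exact Matrix.posSemidef_conjTranspose_mul_self Y

lemma sum_dotProduct_basis {d : ℕ} (B : Fin d → Fin d → ℂ)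
    (hBc : ∑ i, Matrix.vecMulVec (B i) (star (B i)) = 1)
    (A : Matrix (Fin d) (Fin d) ℂ) :
    ∑ i, star (B i) ⬝ᵥ A *ᵥ B i = A.trace := by
  classical
  have hent : ∀ x y, ∑ i, B i x * (starRingEnd ℂ) (B i y) = if x = y then 1 else 0 := by
    intro x y
    have := congrFun (congrFun hBc x) y
    simpa [Matrix.sum_apply, Matrix.vecMulVec_apply, Matrix.one_apply] using this
  calc ∑ i, star (B i) ⬝ᵥ A *ᵥ B i
      = ∑ i, ∑ x, ∑ y, A x y * (B i y * (starRingEnd ℂ) (B i x)) := by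
        refine Finset.sum_congr rfl fun i _ => ?_
        rw [dotProduct]
        refine Finset.sum_congr rfl fun x _ => ?_
        rw [Matrix.mulVec, dotProduct, Pi.star_apply, Complex.star_def,
          Finset.mul_sum]
        refine Finset.sum_congr rfl fun y _ => ?_
        ring
    _ = ∑ x, ∑ y, A x y * ∑ i, B i y * (starRingEnd ℂ) (B i x) := by
        rw [Finset.sum_comm]
        refine Finset.sum_congr rfl fun x _ => ?_
        rw [Finset.sum_comm]
        refine Finset.sum_congr rfl fun y _ => ?_
        rw [Finset.mul_sum]
    _ = ∑ x, A x x := by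
        refine Finset.sum_congr rfl fun x _ => ?_
        rw [Finset.sum_eq_single x]
        · rw [hent x x, if_pos rfl, mul_one]
        · intro y _ hy
          rw [hent y x, if_neg hy, mul_zero]
        · intro h
          exact absurd (Finset.mem_univ x) h
    _ = A.trace := rfl


end Stmt16Aux

/-- if Alice measures projectively in one of two mutually
unbiased bases of her d_A-dimensional system while Bob performs an arbitrary
POVM, the two resulting classical mutual informations with Bob's outcome
satisfy I₁ + I₂ ≤ log₂ d_A. -/
theorem stmt16 (dA : ℕ) (hdA : 2 ≤ dA) {b κ : Type*} [Fintype b] [Fintype κ]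
    [DecidableEq b]
    (ρ : Matrix (Fin dA × b) (Fin dA × b) ℂ) (hρ : IsDensityMatrix ρ)
    (B₁ B₂ : Fin dA → Fin dA → ℂ) (hB₁ : IsONBasis B₁) (hB₂ : IsONBasis B₂)
    (hMUB : ∀ i j, ‖∑ x, star (B₁ i x) * B₂ j x‖ ^ 2 = 1 / dA)
    (N : κ → Matrix b b ℂ) (hN : IsPOVM N) :
    cMutualInfo (measProb ρ (fun i => Matrix.vecMulVec (B₁ i) (star (B₁ i))) N) +
    cMutualInfo (measProb ρ (fun i => Matrix.vecMulVec (B₂ i) (star (B₂ i))) N) ≤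
    Real.logb 2 dA := by
  classical
  obtain ⟨hB₁o, hB₁c⟩ := hB₁
  obtain ⟨hB₂o, hB₂c⟩ := hB₂
  obtain ⟨hρpsd, hρtr⟩ := hρ
  obtain ⟨hNpsd, hNsum⟩ := hN
  have hd : 0 < dA := by omega
  set τ : κ → Matrix (Fin dA) (Fin dA) ℂ :=
    fun s => Matrix.of fun i j => ∑ k, ∑ l, N s k l * ρ (i, l) (j, k) with hτ
  have hτpsd : ∀ s, (τ s).PosSemidef := fun s =>
    Stmt16Aux.tau_posSemidef ρ hρpsd (N s) (hNpsd s)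
  set P₁ : Fin dA → κ → ℝ := fun i s => (star (B₁ i) ⬝ᵥ τ s *ᵥ B₁ i).re with hP₁
  set P₂ : Fin dA → κ → ℝ := fun j s => (star (B₂ j) ⬝ᵥ τ s *ᵥ B₂ j).re with hP₂
  have hmeas1 : measProb ρ (fun i => Matrix.vecMulVec (B₁ i) (star (B₁ i))) N = P₁ := by
    funext i s
    rw [measProb, Stmt16Aux.trace_kron ρ (N s) (B₁ i)]
  have hmeas2 : measProb ρ (fun i => Matrix.vecMulVec (B₂ i) (star (B₂ i))) N = P₂ := by
    funext j s
    rw [measProb, Stmt16Aux.trace_kron ρ (N s) (B₂ j)]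
  have hvals : ∀ s (v : Fin dA → ℂ),
      0 ≤ (star v ⬝ᵥ τ s *ᵥ v).re ∧ (star v ⬝ᵥ τ s *ᵥ v).im = 0 := by
    intro s v
    have h := (hτpsd s).dotProduct_mulVec_nonneg v
    rw [Complex.le_def] at h
    exact ⟨by simpa using h.1, by simpa using h.2.symm⟩
  have hP₁nonneg : ∀ i s, 0 ≤ P₁ i s := fun i s => (hvals s (B₁ i)).1
  have hP₂nonneg : ∀ j s, 0 ≤ P₂ j s := fun j s => (hvals s (B₂ j)).1
  have hτtrace1 : ∀ s, (τ s).trace = (((∑ i, P₁ i s : ℝ)) : ℂ) := by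
    intro s
    rw [← Stmt16Aux.sum_dotProduct_basis B₁ hB₁c (τ s), Complex.ofReal_sum]
    refine Finset.sum_congr rfl fun i _ => ?_
    have h := hvals s (B₁ i)
    apply Complex.ext
    · simp [hP₁]
    · simp [h.2]
  have hτtrace2 : ∀ s, (τ s).trace = (((∑ j, P₂ j s : ℝ)) : ℂ) := by
    intro s
    rw [← Stmt16Aux.sum_dotProduct_basis B₂ hB₂c (τ s), Complex.ofReal_sum]
    refine Finset.sum_congr rfl fun j _ => ?_
    have h := hvals s (B₂ j)
    apply Complex.ext
    · simp [hP₂]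
    · simp [h.2]
  set Q : κ → ℝ := fun s => ∑ i, P₁ i s with hQ
  have hQ2 : ∀ s, Q s = ∑ j, P₂ j s := by
    intro s
    have := (hτtrace1 s).symm.trans (hτtrace2 s)
    exact_mod_cast this
  have hQnonneg : ∀ s, 0 ≤ Q s :=
    fun s => Finset.sum_nonneg fun i _ => hP₁nonneg i s
  have htrsum : ∑ s, (τ s).trace = 1 := by
    have hNe : ∀ k l, ∑ s, N s k l = if k = l then 1 else 0 := by
      intro k l
      have := congrFun (congrFun hNsum k) l
      simpa [Matrix.sum_apply, Matrix.one_apply] using this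
    calc ∑ s, (τ s).trace = ∑ s, ∑ i, τ s i i := rfl
      _ = ∑ i, ∑ s, ∑ k, ∑ l, N s k l * ρ (i, l) (i, k) := Finset.sum_comm
      _ = ∑ i, ∑ k, ∑ l, (∑ s, N s k l) * ρ (i, l) (i, k) := by
          refine Finset.sum_congr rfl fun i _ => ?_
          rw [Finset.sum_comm]
          refine Finset.sum_congr rfl fun k _ => ?_
          rw [Finset.sum_comm]
          refine Finset.sum_congr rfl fun l _ => ?_
          rw [Finset.sum_mul]
      _ = ∑ i, ∑ k, ρ (i, k) (i, k) := by
          refine Finset.sum_congr rfl fun i _ => Finset.sum_congr rfl fun k _ => ?_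
          rw [Finset.sum_eq_single k]
          · rw [hNe k k, if_pos rfl, one_mul]
          · intro l _ hl
            rw [hNe k l, if_neg (Ne.symm hl), zero_mul]
          · intro h
            exact absurd (Finset.mem_univ k) h
      _ = ρ.trace := by
          rw [Matrix.trace, Fintype.sum_prod_type]
          rfl
      _ = 1 := hρtr
  have hQsum : ∑ s, Q s = 1 := by
    have h := congrArg Complex.re htrsum
    rw [Complex.re_sum] at h
    simp only [Complex.one_re] at h
    rw [← h]
    refine Finset.sum_congr rfl fun s _ => ?_
    rw [hτtrace1 s, Complex.ofReal_re]
  have hQs1 : ∀ s, ∑ i, P₁ i s = Q s := fun s => rfl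
  have hQs2 : ∀ s, ∑ j, P₂ j s = Q s := fun s => (hQ2 s).symm
  -- conditional states and Maassen-Uffink per outcome
  have hMU : ∀ s, Q s ≠ 0 →
      Real.log dA ≤ Stmt16Aux.Hn (fun i => P₁ i s / Q s)
        + Stmt16Aux.Hn (fun j => P₂ j s / Q s) := by
    intro s hQns
    set σs : Matrix (Fin dA) (Fin dA) ℂ := ((((Q s)⁻¹ : ℝ)) : ℂ) • τ s with hσs
    have hval_s : ∀ v : Fin dA → ℂ,
        star v ⬝ᵥ σs *ᵥ v = ((((Q s)⁻¹ * (star v ⬝ᵥ τ s *ᵥ v).re : ℝ)) : ℂ) := by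
      intro v
      rw [hσs, Matrix.smul_mulVec, dotProduct_smul]
      have hz : (star v ⬝ᵥ τ s *ᵥ v) = (((star v ⬝ᵥ τ s *ᵥ v).re : ℝ) : ℂ) := by
        apply Complex.ext
        · simp
        · simp [(hvals s v).2]
      rw [smul_eq_mul, hz, ← Complex.ofReal_mul]
      norm_cast
    have hσpsd : σs.PosSemidef := by
      rw [Matrix.posSemidef_iff_dotProduct_mulVec]
      constructor
      · show σsᴴ = σs
        rw [hσs, Matrix.conjTranspose_smul, (hτpsd s).1.eq]
        congr 1
        simp [Complex.star_def, Complex.conj_ofReal]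
      · intro v
        rw [hval_s v, Complex.le_def]
        constructor
        · simp only [Complex.ofReal_re, Complex.zero_re]
          exact mul_nonneg (inv_nonneg.mpr (hQnonneg s)) (hvals s v).1
        · simp
    have hσtr : σs.trace = 1 := by
      rw [hσs, Matrix.trace_smul, hτtrace1 s, smul_eq_mul, ← Complex.ofReal_mul]
      rw [show (Q s)⁻¹ * (∑ i, P₁ i s) = 1 from by
        rw [hQs1 s]; exact inv_mul_cancel₀ hQns]
      norm_cast
    have hB₁o' : ∀ i j, ∑ x, star (B₁ i x) * B₁ j x = if i = j then (1:ℂ) else 0 := by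
      intro i j
      rw [hB₁o i j]
      by_cases h : i = j <;> simp [h]
    have hB₂o' : ∀ i j, ∑ x, star (B₂ i x) * B₂ j x = if i = j then (1:ℂ) else 0 := by
      intro i j
      rw [hB₂o i j]
      by_cases h : i = j <;> simp [h]
    have h := Stmt16Aux.MU_mixed dA hd B₁ B₂ hB₁o' hB₁c hB₂o' hB₂c hMUB σs hσpsd hσtr
    have he1 : (fun i => (star (B₁ i) ⬝ᵥ σs *ᵥ B₁ i).re) = fun i => P₁ i s / Q s := by
      funext i
      rw [hval_s (B₁ i), Complex.ofReal_re, div_eq_inv_mul]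
    have he2 : (fun j => (star (B₂ j) ⬝ᵥ σs *ᵥ B₂ j).re) = fun j => P₂ j s / Q s := by
      funext j
      rw [hval_s (B₂ j), Complex.ofReal_re, div_eq_inv_mul]
    rw [he1, he2] at h
    exact h
  -- decompose the two mutual informations
  have hm1 : cMutualInfo P₁ = (Stmt16Aux.Hn (fun i => ∑ s, P₁ i s)
      - ∑ s, Q s * Stmt16Aux.Hn (fun i => P₁ i s / Q s)) / Real.log 2 := by
    rw [cMutualInfo, Stmt16Aux.shannon_eq_Hn, Stmt16Aux.shannon_eq_Hn,
      Stmt16Aux.shannon_eq_Hn, Stmt16Aux.Hn_chain P₁ hP₁nonneg]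
    simp only [hQs1]
    ring
  have hm2 : cMutualInfo P₂ = (Stmt16Aux.Hn (fun j => ∑ s, P₂ j s)
      - ∑ s, Q s * Stmt16Aux.Hn (fun j => P₂ j s / Q s)) / Real.log 2 := by
    rw [cMutualInfo, Stmt16Aux.shannon_eq_Hn, Stmt16Aux.shannon_eq_Hn,
      Stmt16Aux.shannon_eq_Hn, Stmt16Aux.Hn_chain P₂ hP₂nonneg]
    simp only [hQs2]
    ring
  -- marginal entropies bounded by log d
  have hA1 : Stmt16Aux.Hn (fun i => ∑ s, P₁ i s) ≤ Real.log dA := by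
    have h := Stmt16Aux.Hn_le_log_card (fun i => ∑ s, P₁ i s)
      (fun i => Finset.sum_nonneg fun s _ => hP₁nonneg i s)
      (by rw [Finset.sum_comm]
          rw [show ∑ s, ∑ i, P₁ i s = ∑ s, Q s from
            Finset.sum_congr rfl fun s _ => hQs1 s]
          exact hQsum)
    rwa [Fintype.card_fin] at h
  have hA2 : Stmt16Aux.Hn (fun j => ∑ s, P₂ j s) ≤ Real.log dA := by
    have h := Stmt16Aux.Hn_le_log_card (fun j => ∑ s, P₂ j s)
      (fun j => Finset.sum_nonneg fun s _ => hP₂nonneg j s)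
      (by rw [Finset.sum_comm]
          rw [show ∑ s, ∑ j, P₂ j s = ∑ s, Q s from
            Finset.sum_congr rfl fun s _ => hQs2 s]
          exact hQsum)
    rwa [Fintype.card_fin] at h
  -- conditional entropies bounded below
  have hX : Real.log dA ≤ ∑ s, Q s * Stmt16Aux.Hn (fun i => P₁ i s / Q s)
      + ∑ s, Q s * Stmt16Aux.Hn (fun j => P₂ j s / Q s) := by
    rw [← Finset.sum_add_distrib]
    calc Real.log dA = ∑ s, Q s * Real.log dA := by
          rw [← Finset.sum_mul, hQsum, one_mul]
      _ ≤ ∑ s, (Q s * Stmt16Aux.Hn (fun i => P₁ i s / Q s)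
            + Q s * Stmt16Aux.Hn (fun j => P₂ j s / Q s)) := by
          refine Finset.sum_le_sum fun s _ => ?_
          by_cases hQns : Q s = 0
          · simp [hQns]
          · rw [← mul_add]
            exact mul_le_mul_of_nonneg_left (hMU s hQns) (hQnonneg s)
  -- put it all together
  rw [hmeas1, hmeas2, hm1, hm2, Real.logb]
  rw [← add_div]
  have hlog2 : (0:ℝ) < Real.log 2 := Real.log_pos one_lt_two
  rw [div_le_div_iff_of_pos_right hlog2]
  linarith [hA1, hA2, hX]
end
end

section
/- The DQC1 state ρ_{n+1}(α) = 2^{−(n+1)} Σ_i (|0⟩⟨0| + |1⟩⟨1| + α e^{−iθ_i}|0⟩⟨1| + α e^{iθ_i}|1⟩⟨0|) ⊗ |e_i⟩⟨e_i| (control qubit A, n-qubit register B, where U_n|e_i⟩ = e^{iθ_i}|e_i⟩) is separable across the A:B cut, and its quantum mutual information equals S(A:B) = H{(1+|β|)/2, (1−|β|)/2} − H{(1+α)/2, (1−α)/2} with β = 2^{−n} α Tr(U_n). -/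
open Matrix BigOperators
open scoped Kronecker Classical ComplexOrder

noncomputable section

/-- Separability of a bipartite state: it is a convex combination of product
states. -/
def IsSeparableState {a b : Type*} [Fintype a] [Fintype b]
    (ρ : Matrix (a × b) (a × b) ℂ) : Prop :=
  ∃ (k : ℕ) (w : Fin k → ℝ) (σA : Fin k → Matrix a a ℂ) (σB : Fin k → Matrix b b ℂ),
    (∀ j, 0 ≤ w j) ∧ (∑ j, w j = 1) ∧
    (∀ j, IsDensityMatrix (σA j)) ∧ (∀ j, IsDensityMatrix (σB j)) ∧
    ρ = ∑ j, w j • (σA j ⊗ₖ σB j)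


namespace Stmt19Aux
open Polynomial

lemma multiset_sum_eq {ι : Type*} [Fintype ι] (p : ι → ℝ) (f : ℝ → ℝ) :
    ∑ i, f (p i) = (Multiset.map f (Multiset.map p Finset.univ.val)).sum := by
  rw [Multiset.map_map]; rfl

lemma shannon_multiset_congr {ι κ : Type*} [Fintype ι] [Fintype κ] {p : ι → ℝ} {q : κ → ℝ}
    (h : Multiset.map p Finset.univ.val = Multiset.map q Finset.univ.val) :
    shannon p = shannon q := by
  unfold shannon
  rw [multiset_sum_eq p (fun x => x * Real.logb 2 x),
    multiset_sum_eq q (fun x => x * Real.logb 2 x), h]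

lemma charpoly_unitary_conj {m : Type*} [Fintype m] [DecidableEq m]
    (V D : Matrix m m ℂ) (h1 : V * Vᴴ = 1) : (V * D * Vᴴ).charpoly = D.charpoly := by
  set C' := (C : ℂ →+* ℂ[X]) with hC'
  have h1' : V.map ⇑C' * Vᴴ.map ⇑C' = 1 := by
    rw [← Matrix.map_mul, h1, Matrix.map_one _ (map_zero C') (map_one C')]
  have hdet : (V.map ⇑C').det * (Vᴴ.map ⇑C').det = 1 := by rw [← det_mul, h1', det_one]
  have hsc : V.map ⇑C' * Matrix.scalar m (X : ℂ[X]) = (X : ℂ[X]) • V.map ⇑C' := by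
    ext i j
    simp [Matrix.scalar_apply, Matrix.mul_diagonal, mul_comm]
  have hscalar_one : Matrix.scalar m (X : ℂ[X]) = (X : ℂ[X]) • (1 : Matrix m m ℂ[X]) := by
    ext i j
    by_cases h : i = j <;> simp [Matrix.scalar_apply, Matrix.diagonal_apply, Matrix.one_apply, h]
  have key : charmatrix (V * D * Vᴴ) = V.map ⇑C' * charmatrix D * Vᴴ.map ⇑C' := by
    have e1 : charmatrix D = Matrix.scalar m (X : ℂ[X]) - D.map ⇑C' := rfl
    have e2 : charmatrix (V * D * Vᴴ) = Matrix.scalar m (X : ℂ[X]) - (V * D * Vᴴ).map ⇑C' := rfl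
    rw [e1, e2, Matrix.mul_sub, Matrix.sub_mul, hsc, Matrix.smul_mul, h1',
      ← Matrix.map_mul, ← Matrix.map_mul, hscalar_one]
  rw [Matrix.charpoly, Matrix.charpoly, key, det_mul, det_mul]
  linear_combination D.charmatrix.det * hdet

lemma charpoly_diagonal' {m : Type*} [Fintype m] [DecidableEq m] (d : m → ℂ) :
    (Matrix.diagonal d).charpoly = ∏ i, (X - C (d i)) := by
  have : charmatrix (Matrix.diagonal d) = Matrix.diagonal (fun i => X - C (d i)) := by
    ext i j
    by_cases hij : i = j
    · subst hij; simp
    · simp [Matrix.diagonal_apply_ne _ hij, charmatrix_apply_ne _ _ _ hij]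
  rw [Matrix.charpoly, this, det_diagonal]

lemma eig_multiset {m : Type*} [Fintype m] [DecidableEq m] {v : m → m → ℂ}
    (hv : IsONBasis v) (μ : m → ℝ) {A : Matrix m m ℂ}
    (hA : A = ∑ i, ((μ i : ℝ) : ℂ) • Matrix.vecMulVec (v i) (star (v i))) :
    ∃ h : A.IsHermitian,
      Multiset.map h.eigenvalues Finset.univ.val = Multiset.map μ Finset.univ.val := by
  classical
  set V : Matrix m m ℂ := Matrix.of (fun x i => v i x) with hV
  have hVVh : V * Vᴴ = 1 := by
    ext x y
    have := congrArg (fun M : Matrix m m ℂ => M x y) hv.2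
    simpa [Matrix.mul_apply, Matrix.sum_apply, Matrix.vecMulVec_apply, hV,
      Matrix.conjTranspose_apply] using this
  have hAeq : A = V * Matrix.diagonal (fun i => ((μ i : ℝ) : ℂ)) * Vᴴ := by
    rw [hA]
    ext x y
    rw [Matrix.mul_apply]
    simp only [Matrix.sum_apply, Matrix.smul_apply, Matrix.vecMulVec_apply, smul_eq_mul,
      Matrix.mul_diagonal, Matrix.conjTranspose_apply, hV, Matrix.of_apply, Pi.star_apply]
    exact Finset.sum_congr rfl fun i _ => by ring
  have hH : A.IsHermitian := by
    rw [hA]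
    unfold Matrix.IsHermitian
    ext a b
    simp only [Matrix.conjTranspose_apply, Matrix.sum_apply, Matrix.smul_apply,
      Matrix.vecMulVec_apply, smul_eq_mul, Pi.star_apply, RCLike.star_def, _root_.map_mul,
      map_sum, Complex.conj_conj, Complex.conj_ofReal]
    exact Finset.sum_congr rfl fun i _ => by ring
  refine ⟨hH, ?_⟩
  have hps : A.charpoly = ∏ i, (X - C ((μ i : ℝ) : ℂ)) := by
    rw [hAeq, charpoly_unitary_conj _ _ hVVh, charpoly_diagonal']
  have hW : (hH.eigenvectorUnitary : Matrix m m ℂ) * (hH.eigenvectorUnitary : Matrix m m ℂ)ᴴ = 1 := by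
    have := Matrix.mem_unitaryGroup_iff.mp hH.eigenvectorUnitary.2
    simpa [Matrix.star_eq_conjTranspose] using this
  have hps2 : A.charpoly = ∏ i, (X - C ((hH.eigenvalues i : ℝ) : ℂ)) := by
    conv_lhs => rw [hH.spectral_theorem]
    rw [Unitary.conjStarAlgAut_apply, show (star (hH.eigenvectorUnitary : Matrix m m ℂ)) = (hH.eigenvectorUnitary : Matrix m m ℂ)ᴴ from rfl,
      charpoly_unitary_conj _ _ hW, charpoly_diagonal']
    rfl
  have hprod : (Multiset.map (fun a : ℂ => X - C a)
        (Multiset.map (fun i => ((μ i : ℝ) : ℂ)) Finset.univ.val)).prod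
      = (Multiset.map (fun a : ℂ => X - C a)
        (Multiset.map (fun i => ((hH.eigenvalues i : ℝ) : ℂ)) Finset.univ.val)).prod := by
    have e : ∀ g : m → ℂ, (Multiset.map ((fun a : ℂ => X - C a) ∘ g) Finset.univ.val).prod
        = ∏ i, (X - C (g i)) := fun g => rfl
    rw [Multiset.map_map, Multiset.map_map, e, e, ← hps, ← hps2]
  have hroots := congrArg Polynomial.roots hprod
  rw [roots_multiset_prod_X_sub_C, roots_multiset_prod_X_sub_C] at hroots
  have : Multiset.map Complex.ofReal (Multiset.map μ Finset.univ.val)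
      = Multiset.map Complex.ofReal (Multiset.map hH.eigenvalues Finset.univ.val) := by
    rw [Multiset.map_map, Multiset.map_map]
    exact hroots
  exact (Multiset.map_injective Complex.ofReal_injective this).symm

lemma vnEntropy_of_onb {m : Type*} [Fintype m] [DecidableEq m] {v : m → m → ℂ}
    (hv : IsONBasis v) (μ : m → ℝ) {A : Matrix m m ℂ}
    (hA : A = ∑ i, ((μ i : ℝ) : ℂ) • Matrix.vecMulVec (v i) (star (v i))) :
    vnEntropy A = shannon μ := by
  obtain ⟨h, hm⟩ := eig_multiset hv μ hA
  unfold vnEntropy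
  rw [dif_pos h]
  exact shannon_multiset_congr hm

lemma psd_vecMulVec {m : Type*} [Fintype m] (v : m → ℂ) :
    (Matrix.vecMulVec v (star v)).PosSemidef := by
  rw [Matrix.vecMulVec_eq Unit, ← Matrix.conjTranspose_replicateCol]
  exact Matrix.posSemidef_self_mul_conjTranspose _

lemma psd_real_smul {m : Type*} [Fintype m] {M : Matrix m m ℂ} (h : M.PosSemidef)
    {r : ℝ} (hr : 0 ≤ r) : (((r : ℝ) : ℂ) • M).PosSemidef := by
  constructor
  · unfold Matrix.IsHermitian
    rw [Matrix.conjTranspose_smul, h.1.eq]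
    congr 1
    simp
  · have h0 : (0 : ℂ) ≤ ((r : ℝ) : ℂ) := by
      rw [Complex.le_def]
      simp [hr]
    exact (h.smul h0).2

def sg : Fin 2 → ℝ := ![1, -1]
def rt2 : ℂ := ((Real.sqrt 2 : ℝ) : ℂ)⁻¹
def wv (ζ : ℂ) (s : Fin 2) : Fin 2 → ℂ := ![rt2, (sg s : ℂ) * ζ * rt2]

lemma rt2_mul_self : rt2 * rt2 = (2 : ℂ)⁻¹ := by
  rw [rt2, ← mul_inv, ← Complex.ofReal_mul, Real.mul_self_sqrt (by norm_num)]
  norm_num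

lemma star_rt2 : star rt2 = rt2 := by
  simp [rt2, ← Complex.ofReal_inv, Complex.conj_ofReal]

lemma keyW (ζ : ℂ) (hζ : ζ * star ζ = 1) (r d : ℝ) (a b : Fin 2) :
    ∑ s : Fin 2, (((1 + sg s * r) * d : ℝ) : ℂ) * (wv ζ s a * star (wv ζ s b))
      = (d : ℂ) * !![1, (r : ℂ) * star ζ; (r : ℂ) * ζ, 1] a b := by
  have hζ' : ζ * (starRingEnd ℂ) ζ = 1 := hζ
  fin_cases a <;> fin_cases b <;>
    [ (simp [Fin.sum_univ_two, wv, sg, star_mul', star_rt2]; push_cast; ring_nf;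
        linear_combination (2 * (d : ℂ)) * rt2_mul_self);
      (simp [Fin.sum_univ_two, wv, sg, star_mul', star_rt2]; push_cast; ring_nf;
        linear_combination (2 * (r : ℂ) * (d : ℂ) * (starRingEnd ℂ) ζ) * rt2_mul_self);
      (simp [Fin.sum_univ_two, wv, sg, star_mul', star_rt2]; push_cast; ring_nf;
        linear_combination (2 * (r : ℂ) * (d : ℂ) * ζ) * rt2_mul_self);
      (simp [Fin.sum_univ_two, wv, sg, star_mul', star_rt2]; push_cast; ring_nf;
        linear_combination (2 * (d : ℂ) * ζ * (starRingEnd ℂ) ζ) * rt2_mul_self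
          + (d : ℂ) * hζ')]

lemma keyO (ζ : ℂ) (hζ : ζ * star ζ = 1) (s t : Fin 2) :
    ∑ a : Fin 2, star (wv ζ s a) * wv ζ t a = if s = t then 1 else 0 := by
  have hc : (starRingEnd ℂ) rt2 = rt2 := star_rt2
  have hζ' : ζ * (starRingEnd ℂ) ζ = 1 := hζ
  fin_cases s <;> fin_cases t <;>
    [ (simp [Fin.sum_univ_two, wv, sg, star_mul', hc]; ring_nf;
        linear_combination (1 + (starRingEnd ℂ) ζ * ζ) * rt2_mul_self
          + (2 : ℂ)⁻¹ * hζ');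
      (simp [Fin.sum_univ_two, wv, sg, star_mul', hc]; ring_nf;
        linear_combination (1 - (starRingEnd ℂ) ζ * ζ) * rt2_mul_self
          - (2 : ℂ)⁻¹ * hζ');
      (simp [Fin.sum_univ_two, wv, sg, star_mul', hc]; ring_nf;
        linear_combination (1 - (starRingEnd ℂ) ζ * ζ) * rt2_mul_self
          - (2 : ℂ)⁻¹ * hζ');
      (simp [Fin.sum_univ_two, wv, sg, star_mul', hc]; ring_nf;
        linear_combination (1 + (starRingEnd ℂ) ζ * ζ) * rt2_mul_self
          + (2 : ℂ)⁻¹ * hζ')]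

lemma logb_shift (q : ℝ) (hq : 0 ≤ q) (N : ℕ) :
    q * Real.logb 2 (q / 2 ^ N) = q * Real.logb 2 q - q * N := by
  rcases eq_or_lt_of_le hq with h | h
  · simp [← h]
  · rw [Real.logb_div (ne_of_gt h) (by positivity)]
    rw [show Real.logb 2 ((2 : ℝ) ^ N) = N by
      rw [Real.logb_pow, Real.logb_self_eq_one (by norm_num)]
      ring]
    ring

end Stmt19Aux

set_option maxHeartbeats 1000000 in
/-- the DQC1 state
ρ_{n+1}(α) = 2^{−(n+1)} Σ_i (|0⟩⟨0|+|1⟩⟨1|+αe^{−iθ_i}|0⟩⟨1|+αe^{iθ_i}|1⟩⟨0|)⊗|e_i⟩⟨e_i|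
is separable across the control/register cut, and its quantum mutual
information equals H{(1+|β|)/2,(1−|β|)/2} − H{(1+α)/2,(1−α)/2} with
β = 2^{−n} α Tr(U_n). -/
theorem stmt19 (n : ℕ) (α : ℝ) (hα₀ : 0 ≤ α) (hα₁ : α ≤ 1)
    (U : Matrix (Fin (2 ^ n)) (Fin (2 ^ n)) ℂ)
    (hU : U ∈ Matrix.unitaryGroup (Fin (2 ^ n)) ℂ)
    (e : Fin (2 ^ n) → Fin (2 ^ n) → ℂ) (he : IsONBasis e)
    (θ : Fin (2 ^ n) → ℝ)
    (heig : ∀ i, U.mulVec (e i) = Complex.exp (θ i * Complex.I) • e i)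
    (ρ : Matrix (Fin 2 × Fin (2 ^ n)) (Fin 2 × Fin (2 ^ n)) ℂ)
    (hρ : ρ = (1 / 2 ^ (n + 1) : ℝ) • ∑ i,
        (!![1, (α : ℂ) * Complex.exp (-(θ i) * Complex.I);
            (α : ℂ) * Complex.exp ((θ i) * Complex.I), 1] ⊗ₖ
          Matrix.vecMulVec (e i) (star (e i))))
    (β : ℂ) (hβ : β = (2 ^ n : ℂ)⁻¹ * (α : ℂ) * U.trace) :
    IsSeparableState ρ ∧
    qMutualInfo ρ = H2 ((1 + ‖β‖) / 2) - H2 ((1 + α) / 2) := by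
  classical
  open Stmt19Aux in
  obtain ⟨he1, he2⟩ := he
  -- basic scalar facts
  have h2n : ((2 : ℂ) ^ n) ≠ 0 := by positivity
  have htrPs : ∀ i, ∑ k, e i k * star (e i k) = 1 := by
    intro i
    have := he1 i i
    rw [if_pos rfl] at this
    rw [← this]
    exact Finset.sum_congr rfl fun k _ => mul_comm _ _
  set E : Fin (2 ^ n) → ℂ := fun i => Complex.exp ((θ i : ℂ) * Complex.I) with hEdef
  have hstarE : ∀ i, star (E i) = Complex.exp (-(θ i : ℂ) * Complex.I) := by
    intro i
    show (starRingEnd ℂ) (Complex.exp ((θ i : ℂ) * Complex.I)) = _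
    rw [← Complex.exp_conj]
    congr 1
    have : (starRingEnd ℂ) ((θ i : ℂ) * Complex.I) = (θ i : ℂ) * (-Complex.I) := by
      simp [Complex.conj_ofReal]
    rw [this]
    ring
  have hEunit : ∀ i, E i * star (E i) = 1 := by
    intro i
    rw [hstarE i]
    show Complex.exp _ * Complex.exp _ = 1
    rw [← Complex.exp_add, show ((θ i : ℂ) * Complex.I + -(θ i : ℂ) * Complex.I) = 0 by ring,
      Complex.exp_zero]
  -- the one-qubit matrices
  set Mm : Fin (2 ^ n) → Matrix (Fin 2) (Fin 2) ℂ := fun i =>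
    !![1, (α : ℂ) * Complex.exp (-(θ i) * Complex.I);
       (α : ℂ) * Complex.exp ((θ i) * Complex.I), 1] with hMmdef
  set P : Fin (2 ^ n) → Matrix (Fin (2 ^ n)) (Fin (2 ^ n)) ℂ :=
    fun i => Matrix.vecMulVec (e i) (star (e i)) with hPdef
  have hMme : ∀ i a b, Mm i a b = ((1 : ℝ) : ℂ) * !![1, (α : ℂ) * star (E i);
      (α : ℂ) * E i, 1] a b := by
    intro i a b
    rw [hMmdef]
    rw [hstarE i]
    simp only [hstarE i, hEdef, Complex.ofReal_one, one_mul]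
  have hρ' : ρ = ((1 / 2 ^ (n + 1) : ℝ)) • ∑ i, (Mm i ⊗ₖ P i) := hρ
  have hρe : ∀ a x b y, ρ (a, x) (b, y)
      = ((1 / 2 ^ (n + 1) : ℝ) : ℂ) * ∑ i, Mm i a b * (e i x * star (e i y)) := by
    intro a x b y
    rw [hρ']
    simp only [Matrix.smul_apply, Matrix.sum_apply, Matrix.kroneckerMap_apply,
      Complex.real_smul, Finset.mul_sum, hPdef, Matrix.vecMulVec_apply, Pi.star_apply]
  -- decomposition of each one-qubit matrix
  have hhalfM : ∀ i, (((1 / 2 : ℝ)) : ℂ) • Mm i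
      = ∑ s, (((1 + sg s * α) * (1 / 2) : ℝ) : ℂ) •
          Matrix.vecMulVec (wv (E i) s) (star (wv (E i) s)) := by
    intro i
    ext a b
    rw [Matrix.sum_apply]
    simp only [Matrix.smul_apply, Matrix.vecMulVec_apply, Pi.star_apply, smul_eq_mul]
    rw [keyW (E i) (hEunit i) α (1 / 2) a b]
    rw [hMme i a b]
    push_cast
    ring
  -- Separability
  have hsep : IsSeparableState ρ := by
    refine ⟨2 ^ n, fun _ => ((2 : ℝ) ^ n)⁻¹, fun j => (((1 / 2 : ℝ)) : ℂ) • Mm j,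
      fun j => P j, fun j => by positivity, ?_, ?_, ?_, ?_⟩
    · simp [Finset.sum_const, Finset.card_univ]
    · intro j
      constructor
      · show ((((1 / 2 : ℝ)) : ℂ) • Mm j).PosSemidef
        rw [hhalfM j, Fin.sum_univ_two]
        have w0 : (0 : ℝ) ≤ (1 + sg 0 * α) * (1 / 2) := by
          simp [sg]; linarith
        have w1 : (0 : ℝ) ≤ (1 + sg 1 * α) * (1 / 2) := by
          simp [sg]; linarith
        exact (psd_real_smul (psd_vecMulVec _) w0).add (psd_real_smul (psd_vecMulVec _) w1)
      · show (((((1 / 2 : ℝ)) : ℂ) • Mm j)).trace = 1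
        rw [Matrix.trace_smul, Matrix.trace_fin_two, hMmdef]
        norm_num
    · intro j
      constructor
      · exact psd_vecMulVec _
      · show (Matrix.vecMulVec (e j) (star (e j))).trace = 1
        simp only [Matrix.trace, Matrix.diag, Matrix.vecMulVec_apply, Pi.star_apply]
        exact htrPs j
    · rw [hρ']
      ext ⟨a, x⟩ ⟨b, y⟩
      simp only [Matrix.smul_apply, Matrix.sum_apply, Matrix.kroneckerMap_apply,
        Complex.real_smul, Finset.mul_sum, Matrix.smul_mul, smul_eq_mul]
      refine Finset.sum_congr rfl fun i _ => ?_
      push_cast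
      rw [pow_succ]
      ring
  refine ⟨hsep, ?_⟩
  -- ===== Part 2 : mutual information =====
  -- S(B): the register marginal is maximally mixed
  have hBsum : ∀ x y, (∑ k : Fin 2, ρ (k, x) (k, y))
      = ∑ i, ((((2 : ℝ) ^ n)⁻¹ : ℝ) : ℂ) * (e i x * star (e i y)) := by
    intro x y
    rw [Fin.sum_univ_two, hρe 0 x 0 y, hρe 1 x 1 y, ← mul_add, ← Finset.sum_add_distrib,
      Finset.mul_sum]
    refine Finset.sum_congr rfl fun i _ => ?_
    have h0 : Mm i 0 0 = 1 := by simp [hMmdef]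
    have h1 : Mm i 1 1 = 1 := by simp [hMmdef]
    rw [h0, h1]
    push_cast
    rw [pow_succ]
    have h2r : ((2 : ℂ) ^ n) ≠ 0 := h2n
    field_simp
    ring
  have hBform : ptraceL ρ = ∑ i, ((((2 : ℝ) ^ n)⁻¹ : ℝ) : ℂ) •
      Matrix.vecMulVec (e i) (star (e i)) := by
    ext x y
    show (∑ k : Fin 2, ρ (k, x) (k, y)) = _
    rw [hBsum x y, Matrix.sum_apply]
    refine Finset.sum_congr rfl fun i _ => ?_
    simp [Matrix.smul_apply, Matrix.vecMulVec_apply]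
  -- trace of U
  have hU1 : U = ∑ i, E i • Matrix.vecMulVec (e i) (star (e i)) := by
    have h0 : U = U * ∑ i, Matrix.vecMulVec (e i) (star (e i)) := by rw [he2, mul_one]
    rw [Finset.mul_sum] at h0
    rw [h0]
    refine Finset.sum_congr rfl fun i _ => ?_
    ext x y
    rw [Matrix.mul_apply]
    simp only [Matrix.vecMulVec_apply, Pi.star_apply, Matrix.smul_apply, smul_eq_mul]
    have hmv : ∑ k, U x k * (e i k * star (e i y)) = (U.mulVec (e i) x) * star (e i y) := by
      simp only [Matrix.mulVec, dotProduct, Finset.sum_mul]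
      exact Finset.sum_congr rfl fun k _ => by ring
    rw [hmv, heig i]
    simp only [Pi.smul_apply, smul_eq_mul, hEdef]
    ring
  have htrP1 : ∀ i, (Matrix.vecMulVec (e i) (star (e i))).trace = 1 := by
    intro i
    simp only [Matrix.trace, Matrix.diag, Matrix.vecMulVec_apply, Pi.star_apply]
    exact htrPs i
  have htrU : U.trace = ∑ i, E i := by
    rw [hU1, Matrix.trace_sum]
    refine Finset.sum_congr rfl fun i _ => ?_
    simp [Matrix.trace_smul, htrP1]
  have hβ2 : (α : ℂ) * U.trace = 2 ^ n * β := by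
    rw [hβ]
    field_simp
  -- the unit phase u with β = ‖β‖ u
  set u : ℂ := if β = 0 then 1 else ((‖β‖ : ℝ) : ℂ)⁻¹ * β with hudef
  have hnormsq : β * (starRingEnd ℂ) β = ((‖β‖ : ℝ) : ℂ) * ((‖β‖ : ℝ) : ℂ) := by
    rw [Complex.mul_conj, ← Complex.ofReal_mul]
    norm_cast
    rw [← Complex.sq_norm β, sq]
  have hu : u * star u = 1 := by
    rw [hudef]
    split_ifs with h
    · simp
    · have hbc : ((‖β‖ : ℝ) : ℂ) ≠ 0 := Complex.ofReal_ne_zero.mpr (by simpa using h)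
      have hst : star (((‖β‖ : ℝ) : ℂ)⁻¹ * β) = ((‖β‖ : ℝ) : ℂ)⁻¹ * (starRingEnd ℂ) β := by
        rw [star_mul', star_inv₀, show star ((‖β‖ : ℝ) : ℂ) = ((‖β‖ : ℝ) : ℂ) from
          Complex.conj_ofReal _]
        rfl
      rw [hst, show ((‖β‖ : ℝ) : ℂ)⁻¹ * β * (((‖β‖ : ℝ) : ℂ)⁻¹ * (starRingEnd ℂ) β)
          = (β * (starRingEnd ℂ) β) * (((‖β‖ : ℝ) : ℂ)⁻¹ * ((‖β‖ : ℝ) : ℂ)⁻¹) from by ring,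
        hnormsq]
      field_simp
  have hβu : ((‖β‖ : ℝ) : ℂ) * u = β := by
    rw [hudef]
    split_ifs with h
    · simp [h]
    · have hbc : ((‖β‖ : ℝ) : ℂ) ≠ 0 := Complex.ofReal_ne_zero.mpr (by simpa using h)
      rw [← mul_assoc, mul_inv_cancel₀ hbc, one_mul]

  have hβsu : ((‖β‖ : ℝ) : ℂ) * star u = star β := by
    have h1 := congrArg star hβu
    rw [star_mul', show star ((‖β‖ : ℝ) : ℂ) = ((‖β‖ : ℝ) : ℂ) from Complex.conj_ofReal _] at h1
    rw [← h1]
  -- sums of matrix entries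
  have hsum00 : ∑ _i : Fin (2 ^ n), (1 : ℂ) = (2 : ℂ) ^ n := by
    simp [Finset.sum_const, Finset.card_univ]
  have hsE : ∑ i, (α : ℂ) * Complex.exp ((θ i : ℂ) * Complex.I) = 2 ^ n * β := by
    rw [← Finset.mul_sum,
      show ∑ i, Complex.exp ((θ i : ℂ) * Complex.I) = U.trace from by rw [htrU], hβ2]
  have hsE' : ∑ i, (α : ℂ) * Complex.exp (-(θ i : ℂ) * Complex.I) = 2 ^ n * star β := by
    have h1 : ∀ i : Fin (2 ^ n), (α : ℂ) * Complex.exp (-(θ i : ℂ) * Complex.I)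
        = (starRingEnd ℂ) ((α : ℂ) * Complex.exp ((θ i : ℂ) * Complex.I)) := by
      intro i
      rw [_root_.map_mul, Complex.conj_ofReal]
      congr 1
      exact (hstarE i).symm
    rw [Finset.sum_congr rfl (fun i _ => h1 i), ← map_sum (starRingEnd ℂ), hsE, _root_.map_mul,
      map_pow]
    congr 2
    exact map_ofNat (starRingEnd ℂ) 2
  -- the control marginal
  have hAform : ptraceR ρ = ∑ s, (((1 + sg s * ‖β‖) * (1 / 2) : ℝ) : ℂ) •
      Matrix.vecMulVec (wv u s) (star (wv u s)) := by
    ext a b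
    show (∑ k, ρ (a, k) (b, k)) = _
    have hL : (∑ k, ρ (a, k) (b, k))
        = ((1 / 2 ^ (n + 1) : ℝ) : ℂ) * ∑ i, Mm i a b := by
      rw [Finset.sum_congr rfl (fun k _ => hρe a k b k), ← Finset.mul_sum]
      congr 1
      rw [Finset.sum_comm]
      refine Finset.sum_congr rfl fun i _ => ?_
      rw [← Finset.mul_sum, htrPs i, mul_one]
    rw [hL, Matrix.sum_apply]
    have hRHS : ∀ s : Fin 2, ((((1 + sg s * ‖β‖) * (1 / 2) : ℝ) : ℂ) •
          Matrix.vecMulVec (wv u s) (star (wv u s))) a b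
        = (((1 + sg s * ‖β‖) * (1 / 2) : ℝ) : ℂ) * (wv u s a * star (wv u s b)) := by
      intro s
      simp [Matrix.smul_apply, Matrix.vecMulVec_apply]
    rw [Finset.sum_congr rfl (fun s _ => hRHS s), keyW u hu ‖β‖ (1 / 2) a b]
    fin_cases a <;> fin_cases b
    · simp only [hMmdef, Matrix.cons_val', Matrix.cons_val_zero, Matrix.empty_val',
        Matrix.cons_val_fin_one, Matrix.of_apply, Fin.zero_eta, Fin.mk_one,
        Matrix.cons_val_one, Matrix.head_cons, Matrix.head_fin_const]
      rw [hsum00]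
      push_cast
      rw [pow_succ]
      field_simp
    · simp only [hMmdef, Matrix.cons_val', Matrix.cons_val_zero, Matrix.empty_val',
        Matrix.cons_val_fin_one, Matrix.of_apply, Fin.zero_eta, Fin.mk_one,
        Matrix.cons_val_one, Matrix.head_cons, Matrix.head_fin_const]
      rw [hsE', hβsu]
      push_cast
      rw [pow_succ]
      field_simp
    · simp only [hMmdef, Matrix.cons_val', Matrix.cons_val_zero, Matrix.empty_val',
        Matrix.cons_val_fin_one, Matrix.of_apply, Fin.zero_eta, Fin.mk_one,
        Matrix.cons_val_one, Matrix.head_cons, Matrix.head_fin_const]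
      rw [hsE, hβu]
      push_cast
      rw [pow_succ]
      field_simp
    · simp only [hMmdef, Matrix.cons_val', Matrix.cons_val_zero, Matrix.empty_val',
        Matrix.cons_val_fin_one, Matrix.of_apply, Fin.zero_eta, Fin.mk_one,
        Matrix.cons_val_one, Matrix.head_cons, Matrix.head_fin_const]
      rw [hsum00]
      push_cast
      rw [pow_succ]
      field_simp
  -- ONB for the control marginal
  have hONBu : IsONBasis (wv u) := by
    constructor
    · intro i j
      rw [keyO u hu i j]
      by_cases h : i = j <;> simp [h]
    · ext a b
      rw [Matrix.sum_apply]
      have hkey := keyW u hu 0 1 a b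
      simp only [Complex.ofReal_zero, zero_mul, Complex.ofReal_mul, Complex.ofReal_add,
        Complex.ofReal_one, mul_zero, add_zero, mul_one, one_mul] at hkey
      rw [show (∑ s : Fin 2, Matrix.vecMulVec (wv u s) (star (wv u s)) a b)
          = ∑ s : Fin 2, wv u s a * star (wv u s b) from
        Finset.sum_congr rfl fun s _ => by simp [Matrix.vecMulVec_apply], hkey,
        Matrix.one_fin_two]
  -- eigen-decomposition of ρ
  set Φ : (Fin 2 × Fin (2 ^ n)) → (Fin 2 × Fin (2 ^ n)) → ℂ :=
    fun p q => wv (E p.2) p.1 q.1 * e p.2 q.2 with hΦdef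
  set μAB : (Fin 2 × Fin (2 ^ n)) → ℝ :=
    fun p => (1 + sg p.1 * α) * (1 / 2 ^ (n + 1)) with hμdef
  have hρdec : ρ = ∑ p, ((μAB p : ℝ) : ℂ) • Matrix.vecMulVec (Φ p) (star (Φ p)) := by
    ext ⟨a, x⟩ ⟨b, y⟩
    rw [Matrix.sum_apply, hρe a x b y, Fintype.sum_prod_type, Finset.sum_comm,
      Finset.mul_sum]
    refine Finset.sum_congr rfl fun i _ => ?_
    have hkey := keyW (E i) (hEunit i) α (1 / 2 ^ (n + 1)) a b
    calc ((1 / 2 ^ (n + 1) : ℝ) : ℂ) * (Mm i a b * (e i x * star (e i y)))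
        = (((1 / 2 ^ (n + 1) : ℝ) : ℂ) * !![1, (α : ℂ) * star (E i);
            (α : ℂ) * E i, 1] a b) * (e i x * star (e i y)) := by
          rw [hMme i a b]
          push_cast
          ring
      _ = (∑ s : Fin 2, (((1 + sg s * α) * (1 / 2 ^ (n + 1)) : ℝ) : ℂ) *
            (wv (E i) s a * star (wv (E i) s b))) * (e i x * star (e i y)) := by
          rw [hkey]
      _ = ∑ s : Fin 2, ((μAB (s, i) : ℝ) : ℂ) •
            Matrix.vecMulVec (Φ (s, i)) (star (Φ (s, i))) (a, x) (b, y) := by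
          rw [Finset.sum_mul]
          refine Finset.sum_congr rfl fun s _ => ?_
          simp only [Matrix.smul_apply, Matrix.vecMulVec_apply, Pi.star_apply, smul_eq_mul,
            hΦdef, hμdef, star_mul']
          ring
  have hONBΦ : IsONBasis Φ := by
    constructor
    · rintro ⟨s, i⟩ ⟨t, j⟩
      rw [Fintype.sum_prod_type]
      rw [show (∑ a : Fin 2, ∑ x : Fin (2 ^ n), star (Φ (s, i) (a, x)) * Φ (t, j) (a, x))
          = (∑ a : Fin 2, star (wv (E i) s a) * wv (E j) t a)
            * (∑ x, star (e i x) * e j x) from ?_]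
      · rw [he1 i j]
        by_cases hij : i = j
        · subst hij
          rw [if_pos rfl, mul_one, keyO (E i) (hEunit i) s t]
          by_cases hst : s = t <;> simp [hst, Prod.ext_iff]
        · rw [if_neg hij, mul_zero, if_neg (by simp [Prod.ext_iff, hij])]
      · rw [Finset.sum_mul_sum]
        refine Finset.sum_congr rfl fun a _ => Finset.sum_congr rfl fun x _ => ?_
        simp only [hΦdef, star_mul']
        ring
    · ext ⟨a, x⟩ ⟨b, y⟩
      rw [Matrix.sum_apply, Fintype.sum_prod_type, Finset.sum_comm]
      have hper : ∀ i, (∑ s, Matrix.vecMulVec (Φ (s, i)) (star (Φ (s, i))) (a, x) (b, y))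
          = (1 : Matrix (Fin 2) (Fin 2) ℂ) a b * (e i x * star (e i y)) := by
        intro i
        have hkey := keyW (E i) (hEunit i) 0 1 a b
        simp only [Complex.ofReal_zero, zero_mul, Complex.ofReal_mul, Complex.ofReal_add,
          Complex.ofReal_one, mul_zero, add_zero, mul_one, one_mul] at hkey
        calc (∑ s, Matrix.vecMulVec (Φ (s, i)) (star (Φ (s, i))) (a, x) (b, y))
            = (∑ s : Fin 2, wv (E i) s a * star (wv (E i) s b)) * (e i x * star (e i y)) := by
              rw [Finset.sum_mul]
              refine Finset.sum_congr rfl fun s _ => ?_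
              simp only [Matrix.vecMulVec_apply, Pi.star_apply, hΦdef, star_mul']
              ring
          _ = _ := by rw [hkey, Matrix.one_fin_two]
      rw [Finset.sum_congr rfl fun i _ => hper i, ← Finset.mul_sum]
      have hsum1 : (∑ i, e i x * star (e i y))
          = (1 : Matrix (Fin (2 ^ n)) (Fin (2 ^ n)) ℂ) x y := by
        have := congrArg (fun M : Matrix (Fin (2 ^ n)) (Fin (2 ^ n)) ℂ => M x y) he2
        simpa [Matrix.sum_apply, Matrix.vecMulVec_apply, hPdef] using this
      rw [hsum1]
      by_cases hab : a = b <;> by_cases hxy : x = y <;>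
        simp [Matrix.one_apply, hab, hxy, Prod.ext_iff]
  -- put the three entropies together
  have hqmi : qMutualInfo ρ = shannon (fun s : Fin 2 => (1 + sg s * ‖β‖) * (1 / 2))
      + shannon (fun _ : Fin (2 ^ n) => ((2 : ℝ) ^ n)⁻¹) - shannon μAB := by
    unfold qMutualInfo
    rw [vnEntropy_of_onb hONBu _ hAform, vnEntropy_of_onb ⟨he1, he2⟩ _ hBform,
      vnEntropy_of_onb hONBΦ _ hρdec]
  rw [hqmi]
  -- evaluate the three Shannon entropies
  have h2nR : ((2 : ℝ) ^ n) ≠ 0 := by positivity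
  have hSA : shannon (fun s : Fin 2 => (1 + sg s * ‖β‖) * (1 / 2)) = H2 ((1 + ‖β‖) / 2) := by
    unfold H2
    congr 1
    funext s
    fin_cases s <;> simp [sg] <;> ring
  have hSB : shannon (fun _ : Fin (2 ^ n) => ((2 : ℝ) ^ n)⁻¹) = n := by
    unfold shannon
    rw [Finset.sum_const, Finset.card_univ, Fintype.card_fin, nsmul_eq_mul]
    push_cast
    rw [show ((2 : ℝ) ^ n)⁻¹ = 1 / 2 ^ n from (one_div _).symm,
      show Real.logb 2 (1 / 2 ^ n) = 1 * Real.logb 2 1 - 1 * n from by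
        simpa using logb_shift 1 zero_le_one n]
    simp only [Real.logb_one]
    field_simp
    ring
  have hSAB : shannon μAB = n + H2 ((1 + α) / 2) := by
    have hμval : ∀ (s : Fin 2) (i : Fin (2 ^ n)), μAB (s, i) = ((1 + sg s * α) / 2) / 2 ^ n := by
      intro s i
      rw [hμdef]
      show (1 + sg s * α) * (1 / 2 ^ (n + 1)) = _
      rw [pow_succ]
      ring
    have hq : ∀ s : Fin 2, (0 : ℝ) ≤ (1 + sg s * α) / 2 := by
      intro s
      fin_cases s <;> simp [sg] <;> linarith
    have hterm : ∀ s : Fin 2, (∑ i : Fin (2 ^ n), μAB (s, i) * Real.logb 2 (μAB (s, i)))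
        = (1 + sg s * α) / 2 * Real.logb 2 ((1 + sg s * α) / 2) - (1 + sg s * α) / 2 * n := by
      intro s
      rw [Finset.sum_congr rfl fun i _ => by rw [hμval s i]]
      rw [Finset.sum_const, Finset.card_univ, Fintype.card_fin, nsmul_eq_mul]
      push_cast
      have := logb_shift ((1 + sg s * α) / 2) (hq s) n
      rw [show (2 : ℝ) ^ n * ((1 + sg s * α) / 2 / 2 ^ n * Real.logb 2 ((1 + sg s * α) / 2 / 2 ^ n))
          = (1 + sg s * α) / 2 * Real.logb 2 ((1 + sg s * α) / 2 / 2 ^ n) from by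
        field_simp, this]
    unfold shannon
    rw [Fintype.sum_prod_type, Fin.sum_univ_two, hterm 0, hterm 1]
    unfold H2 shannon
    rw [Fin.sum_univ_two]
    simp only [Matrix.cons_val_zero, Matrix.cons_val_one, Matrix.head_cons]
    rw [show (1 + sg 0 * α) / 2 = (1 + α) / 2 from by simp [sg],
      show (1 + sg 1 * α) / 2 = 1 - (1 + α) / 2 from by simp [sg]; ring]
    ring
  rw [hSA, hSB, hSAB]
  ring
end
end
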